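/- arXiv:1106.0839 — 5 statements merged into one kernel-verified Lean document; each statement's English description precedes it below -/
import Mathlib

section
/- Let K be an algebraically closed field and let P be a homogeneous prime ideal in K[T_1,...,T_n] whose vanishing locus V ⊆ K^n is closed under addition (as well as under scalar multiplication, which is automatic since P is homogeneous). Then P is generated by linear forms. -/
set_option synthInstance.maxHeartbeats 1000000
set_option maxHeartbeats 1000000

open MvPolynomial

/-- Evaluating a homogeneous polynomial at a scalar multiple. -/
lemma aux_eval_smul_of_isHomogeneous {K : Type*} [CommSemiring K] {n : ℕ}
    {p : MvPolynomial (Fin n) K} {k : ℕ} (hp : p.IsHomogeneous k) (l : K) (c : Fin n → K) :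
    MvPolynomial.eval (l • c) p = l ^ k * MvPolynomial.eval c p := by
  rw [eval_eq, eval_eq, Finset.mul_sum]
  refine Finset.sum_congr rfl fun d hd => ?_
  have hdeg : ∑ i ∈ d.support, d i = k := by
    have := hp (MvPolynomial.mem_support_iff.mp hd)
    simpa [Finsupp.weight_apply, Finsupp.sum] using this
  have : ∏ i ∈ d.support, (l • c) i ^ d i
      = l ^ k * ∏ i ∈ d.support, c i ^ d i := by
    simp only [Pi.smul_apply, smul_eq_mul, mul_pow]
    rw [Finset.prod_mul_distrib, Finset.prod_pow_eq_pow_sum, hdeg]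
  rw [this]; ring

/-- `f - f∘g` lies in the ideal generated by the `X i - g i`. -/
lemma aux_sub_bind₁_mem_span {K : Type*} [CommRing K] {n : ℕ}
    (g : Fin n → MvPolynomial (Fin n) K) (f : MvPolynomial (Fin n) K) :
    f - MvPolynomial.bind₁ g f ∈
      Ideal.span (Set.range fun i => (MvPolynomial.X i : MvPolynomial (Fin n) K) - g i) := by
  induction f using MvPolynomial.induction_on with
  | C a => simp
  | add p q hp hq =>
    rw [map_add]
    have : p + q - (MvPolynomial.bind₁ g p + MvPolynomial.bind₁ g q)
        = (p - MvPolynomial.bind₁ g p) + (q - MvPolynomial.bind₁ g q) := by ring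
    rw [this]
    exact Ideal.add_mem _ hp hq
  | mul_X p i hp =>
    rw [map_mul, MvPolynomial.bind₁_X_right]
    have : p * MvPolynomial.X i - MvPolynomial.bind₁ g p * g i
        = p * (MvPolynomial.X i - g i) + (p - MvPolynomial.bind₁ g p) * g i := by ring
    rw [this]
    exact Ideal.add_mem _
      (Ideal.mul_mem_left _ _ (Ideal.subset_span ⟨i, rfl⟩))
      (Ideal.mul_mem_right _ _ hp)

/-- Let `K` be an algebraically closed field and `P` a homogeneous prime ideal of
`K[T_1,…,T_n]` whose vanishing locus `V ⊆ K^n` is closed under addition. Then `P` is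
generated by linear forms. -/
theorem homogeneous_prime_with_additive_variety_is_linear
    (K : Type*) [Field K] [IsAlgClosed K] (n : ℕ)
    (P : Ideal (MvPolynomial (Fin n) K)) (hprime : P.IsPrime)
    (hhom : ∀ p ∈ P, ∀ k : ℕ, MvPolynomial.homogeneousComponent k p ∈ P)
    (hadd : ∀ c d : Fin n → K,
      (∀ H ∈ P, MvPolynomial.eval c H = 0) → (∀ H ∈ P, MvPolynomial.eval d H = 0) →
      (∀ H ∈ P, MvPolynomial.eval (c + d) H = 0)) :
    P = Ideal.span {p : MvPolynomial (Fin n) K | p ∈ P ∧ p.IsHomogeneous 1} := by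
  -- The zero locus is closed under scalar multiplication
  have hsmul : ∀ (l : K) (c : Fin n → K), (∀ H ∈ P, MvPolynomial.eval c H = 0) →
      ∀ H ∈ P, MvPolynomial.eval (l • c) H = 0 := by
    intro l c hc H hH
    have hsum := MvPolynomial.sum_homogeneousComponent H
    calc MvPolynomial.eval (l • c) H
        = MvPolynomial.eval (l • c)
            (∑ i ∈ Finset.range (H.totalDegree + 1), MvPolynomial.homogeneousComponent i H) := by
          rw [hsum]
      _ = 0 := by
          rw [map_sum]
          refine Finset.sum_eq_zero fun i _ => ?_
          rw [aux_eval_smul_of_isHomogeneous (MvPolynomial.homogeneousComponent_isHomogeneous i H)]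
          rw [hc _ (hhom H hH i), mul_zero]
  -- 0 is in the zero locus
  have hzero : ∀ H ∈ P, MvPolynomial.eval (0 : Fin n → K) H = 0 := by
    intro H hH
    have h0 : MvPolynomial.homogeneousComponent 0 H ∈ P := hhom H hH 0
    rw [MvPolynomial.homogeneousComponent_zero] at h0
    have : MvPolynomial.constantCoeff H = 0 := by
      by_contra hne
      exact hprime.ne_top (P.eq_top_of_isUnit_mem h0 ((isUnit_iff_ne_zero.mpr hne).map MvPolynomial.C))
    rw [MvPolynomial.eval_zero, this]
  -- The zero locus as a submodule
  let W : Submodule K (Fin n → K) :=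
    { carrier := MvPolynomial.zeroLocus K P
      add_mem' := fun {c d} hc hd => by
        simp only [MvPolynomial.mem_zeroLocus_iff, Set.mem_setOf_eq, MvPolynomial.aeval_eq_eval] at *
        exact hadd c d hc hd
      zero_mem' := by
        simp only [MvPolynomial.mem_zeroLocus_iff, Set.mem_setOf_eq, MvPolynomial.aeval_eq_eval]
        exact hzero
      smul_mem' := fun l c hc => by
        simp only [MvPolynomial.mem_zeroLocus_iff, Set.mem_setOf_eq, MvPolynomial.aeval_eq_eval] at *
        exact hsmul l c hc }
  -- Nullstellensatz: P = I(V(P))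
  have hVI : MvPolynomial.vanishingIdeal K (MvPolynomial.zeroLocus K P) = P := by
    rw [MvPolynomial.vanishingIdeal_zeroLocus_eq_radical, hprime.radical]
  -- A projection onto W
  obtain ⟨Q, hQ⟩ := Submodule.exists_isCompl W
  let pr : (Fin n → K) →ₗ[K] (Fin n → K) :=
    W.subtype.comp (Submodule.linearProjOfIsCompl W Q hQ)
  have hprW : ∀ x, pr x ∈ W := fun x => (Submodule.linearProjOfIsCompl W Q hQ x).2
  have hprid : ∀ c ∈ W, pr c = c := by
    intro c hc
    have h1 : Submodule.linearProjOfIsCompl W Q hQ c = ⟨c, hc⟩ :=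
      Submodule.linearProjOfIsCompl_apply_left hQ ⟨c, hc⟩
    show W.subtype (Submodule.linearProjOfIsCompl W Q hQ c) = c
    rw [h1]
    rfl
  -- Linear forms representing the projection
  let π : Fin n → MvPolynomial (Fin n) K :=
    fun i => ∑ j, MvPolynomial.C (pr (Pi.single j 1) i) * MvPolynomial.X j
  have hπeval : ∀ (c : Fin n → K) (i : Fin n), MvPolynomial.eval c (π i) = pr c i := by
    intro c i
    have hc : ∑ j, c j • (Pi.single j 1 : Fin n → K) = c := by
      conv_rhs => rw [← Finset.univ_sum_single c]
      refine Finset.sum_congr rfl fun j _ => ?_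
      rw [← Pi.single_smul, smul_eq_mul, mul_one]
    conv_rhs => rw [← hc]
    rw [map_sum]
    simp only [π, map_sum, map_mul, MvPolynomial.eval_C, MvPolynomial.eval_X, map_smul]
    rw [Finset.sum_apply]
    exact Finset.sum_congr rfl fun j _ => by
      simp [mul_comm]
  have hπhom : ∀ i, (π i).IsHomogeneous 1 :=
    fun i => MvPolynomial.IsHomogeneous.sum _ _ _
      fun j _ => MvPolynomial.isHomogeneous_C_mul_X _ _
  -- Each X i - π i is a linear form in P
  have hlin : ∀ i, (MvPolynomial.X i - π i) ∈ P ∧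
      (MvPolynomial.X i - π i : MvPolynomial (Fin n) K).IsHomogeneous 1 := by
    intro i
    constructor
    · rw [← hVI]
      rw [MvPolynomial.mem_vanishingIdeal_iff]
      intro c hc
      rw [MvPolynomial.aeval_eq_eval]
      rw [map_sub, MvPolynomial.eval_X, hπeval]
      rw [hprid c hc, sub_self]
    · exact (MvPolynomial.isHomogeneous_X _ _).sub (hπhom i)
  -- conclude
  apply le_antisymm
  · intro f hf
    have hbind : MvPolynomial.bind₁ π f = 0 := by
      apply MvPolynomial.funext
      intro x
      rw [map_zero]
      have : MvPolynomial.eval x (MvPolynomial.bind₁ π f)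
          = MvPolynomial.eval (fun i => MvPolynomial.eval x (π i)) f := by
        simpa using MvPolynomial.aeval_bind₁ x π f
      rw [this]
      have : (fun i => MvPolynomial.eval x (π i)) = pr x := by
        funext i; exact hπeval x i
      rw [this]
      have h : ∀ p ∈ P, MvPolynomial.aeval (pr x) p = 0 := hprW x
      simpa using h f hf
    have hmem : f ∈ Ideal.span (Set.range fun i =>
        (MvPolynomial.X i : MvPolynomial (Fin n) K) - π i) := by
      have := aux_sub_bind₁_mem_span π f
      rwa [hbind, sub_zero] at this
    refine Ideal.span_mono ?_ hmem
    rintro _ ⟨i, rfl⟩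
    exact ⟨(hlin i).1, (hlin i).2⟩
  · rw [Ideal.span_le]
    intro p hp
    exact hp.1
end

section
/- Let K be a field, let y_1,...,y_r, z_1,...,z_s be indeterminates, α_1,...,α_n ∈ K[y_1,...,y_r], β_1,...,β_n ∈ K[z_1,...,z_s]. Suppose the kernel P of the K-algebra map K[T_1,...,T_n] → K[α_1,...,α_n], T_i ↦ α_i, equals the kernel of the map T_i ↦ β_i into K[β_1,...,β_n], and is contained in the kernel of the map T_i ↦ α_i + β_i into K[y's, z's]. If P is homogeneous, then P is generated by linear forms. -/
set_option synthInstance.maxHeartbeats 1000000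
set_option maxHeartbeats 1000000

set_option linter.unusedSectionVars false
set_option linter.unnecessarySimpa false

namespace LinLem
open MvPolynomial Finset

section SumMonomials

variable {A B : Type*}

/-- embed a monomial on `A` into `A ⊕ B` -/
noncomputable def embl (m : A →₀ ℕ) : (A ⊕ B) →₀ ℕ := Finsupp.mapDomain Sum.inl m
noncomputable def embr (m : B →₀ ℕ) : (A ⊕ B) →₀ ℕ := Finsupp.mapDomain Sum.inr m

@[simp] lemma embl_inl (m : A →₀ ℕ) (a : A) : (embl (B := B) m) (Sum.inl a) = m a :=
  Finsupp.mapDomain_apply Sum.inl_injective m a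

@[simp] lemma embl_inr (m : A →₀ ℕ) (b : B) : (embl (B := B) m) (Sum.inr b) = 0 :=
  Finsupp.mapDomain_notin_range m _ (by simp)

@[simp] lemma embr_inr (m : B →₀ ℕ) (b : B) : (embr (A := A) m) (Sum.inr b) = m b :=
  Finsupp.mapDomain_apply Sum.inr_injective m b

@[simp] lemma embr_inl (m : B →₀ ℕ) (a : A) : (embr (A := A) m) (Sum.inl a) = 0 :=
  Finsupp.mapDomain_notin_range m _ (by simp)

lemma embl_add_embr_eq (m : (A ⊕ B) →₀ ℕ) :
    embl (m.comapDomain Sum.inl Sum.inl_injective.injOn) +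
      embr (m.comapDomain Sum.inr Sum.inr_injective.injOn) = m := by
  ext x
  cases x with
  | inl a => simp [Finsupp.comapDomain_apply]
  | inr b => simp [Finsupp.comapDomain_apply]

lemma embl_add_embr_inj {m₁ n₁ : A →₀ ℕ} {m₂ n₂ : B →₀ ℕ}
    (h : embl m₁ + embr m₂ = embl n₁ + embr n₂) : m₁ = n₁ ∧ m₂ = n₂ := by
  constructor
  · ext a; have := congrArg (fun f => f (Sum.inl a)) h; simpa using this
  · ext b; have := congrArg (fun f => f (Sum.inr b)) h; simpa using this

variable [Fintype A] [Fintype B]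

/-- degree in the left variables -/
def tdeg (m : (A ⊕ B) →₀ ℕ) : ℕ := ∑ a : A, m (Sum.inl a)
/-- degree in the right variables -/
def udeg (m : (A ⊕ B) →₀ ℕ) : ℕ := ∑ b : B, m (Sum.inr b)

lemma degree_eq_sum_fintype {ι : Type*} [Fintype ι] (m : ι →₀ ℕ) :
    m.degree = ∑ i : ι, m i := by
  rw [Finsupp.degree]
  exact Finset.sum_subset (Finset.subset_univ _)
    (fun x _ hx => Finsupp.notMem_support_iff.mp hx)

lemma degree_eq_tdeg_add_udeg (m : (A ⊕ B) →₀ ℕ) : m.degree = tdeg m + udeg m := by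
  rw [degree_eq_sum_fintype, Fintype.sum_sum_type]; rfl

@[simp] lemma tdeg_add (m m' : (A ⊕ B) →₀ ℕ) : tdeg (m + m') = tdeg m + tdeg m' := by
  simp [tdeg, Finset.sum_add_distrib]

@[simp] lemma udeg_add (m m' : (A ⊕ B) →₀ ℕ) : udeg (m + m') = udeg m + udeg m' := by
  simp [udeg, Finset.sum_add_distrib]

@[simp] lemma tdeg_embl (m : A →₀ ℕ) : tdeg (embl (B := B) m) = m.degree := by
  rw [degree_eq_sum_fintype]; simp [tdeg]

@[simp] lemma udeg_embl (m : A →₀ ℕ) : udeg (embl (B := B) m) = 0 := by simp [udeg]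

@[simp] lemma tdeg_embr (m : B →₀ ℕ) : tdeg (embr (A := A) m) = 0 := by simp [tdeg]

@[simp] lemma udeg_embr (m : B →₀ ℕ) : udeg (embr (A := A) m) = m.degree := by
  rw [degree_eq_sum_fintype]; simp [udeg]

lemma udeg_eq_zero_iff (m : (A ⊕ B) →₀ ℕ) : udeg m = 0 ↔ ∀ b : B, m (Sum.inr b) = 0 := by
  simpa [udeg] using Finset.sum_eq_zero_iff (s := (Finset.univ : Finset B))

lemma tdeg_eq_zero_iff (m : (A ⊕ B) →₀ ℕ) : tdeg m = 0 ↔ ∀ a : A, m (Sum.inl a) = 0 := by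
  simpa [tdeg] using Finset.sum_eq_zero_iff (s := (Finset.univ : Finset A))

end SumMonomials


section Products

variable {K : Type*} [CommRing K] {σ τ : Type*}

lemma coeff_rename_inl_mul_inr (u : MvPolynomial σ K) (v : MvPolynomial τ K)
    (m₁ : σ →₀ ℕ) (m₂ : τ →₀ ℕ) :
    coeff (embl m₁ + embr m₂) (rename Sum.inl u * rename Sum.inr v)
      = coeff m₁ u * coeff m₂ v := by
  classical
  have hu := as_sum u
  have hv := as_sum v
  calc coeff (embl m₁ + embr m₂) (rename Sum.inl u * rename Sum.inr v)
      = coeff (embl m₁ + embr m₂)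
          (∑ a ∈ u.support, ∑ b ∈ v.support,
            monomial (embl a + embr b) (coeff a u * coeff b v)) := by
        congr 1
        conv_lhs => rw [hu, hv]
        rw [map_sum, map_sum, Finset.sum_mul_sum]
        refine Finset.sum_congr rfl fun a _ => Finset.sum_congr rfl fun b _ => ?_
        rw [rename_monomial, rename_monomial, monomial_mul]
        rfl
    _ = ∑ a ∈ u.support, ∑ b ∈ v.support,
          (if b = m₂ ∧ a = m₁ then coeff a u * coeff b v else 0) := by
        rw [coeff_sum]
        refine Finset.sum_congr rfl fun a _ => ?_
        rw [coeff_sum]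
        refine Finset.sum_congr rfl fun b _ => ?_
        rw [coeff_monomial]
        congr 1
        simp only [eq_iff_iff]
        constructor
        · intro h
          obtain ⟨h1, h2⟩ := embl_add_embr_inj h
          exact ⟨h2, h1⟩
        · rintro ⟨rfl, rfl⟩; rfl
    _ = coeff m₁ u * coeff m₂ v := by
        simp only [ite_and]
        rw [Finset.sum_congr rfl (fun a _ => Finset.sum_ite_eq' v.support m₂
          (fun b => if a = m₁ then coeff a u * coeff b v else 0))]
        by_cases h2 : m₂ ∈ v.support
        · simp only [h2, if_true]
          rw [Finset.sum_ite_eq' u.support m₁ (fun a => coeff a u * coeff m₂ v)]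
          by_cases h1 : m₁ ∈ u.support
          · simp [h1]
          · simp [h1, MvPolynomial.notMem_support_iff.mp h1]
        · simp only [h2, if_false]
          rw [MvPolynomial.notMem_support_iff.mp h2, mul_zero]
          simp
  
lemma linearIndependent_mul_rename {ι κ : Type*} {u : ι → MvPolynomial σ K}
    {v : κ → MvPolynomial τ K} (hu : LinearIndependent K u) (hv : LinearIndependent K v) :
    LinearIndependent K
      (fun p : ι × κ => rename Sum.inl (u p.1) * rename (Sum.inr : τ → σ ⊕ τ) (v p.2)) := by
  rw [linearIndependent_iff']
  intro s g hsum i hi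
  classical
  set sA := s.image Prod.fst with hsA
  set sB := s.image Prod.snd with hsB
  set G : ι → κ → K := fun a b => if (a, b) ∈ s then g (a, b) else 0 with hG
  set e : ι × κ → MvPolynomial (σ ⊕ τ) K :=
    fun p => rename Sum.inl (u p.1) * rename Sum.inr (v p.2) with he
  have hsub : s ⊆ sA ×ˢ sB := by
    intro p hp
    rw [Finset.mem_product]
    exact ⟨Finset.mem_image_of_mem _ hp, Finset.mem_image_of_mem _ hp⟩
  have hS : ∑ a ∈ sA, ∑ b ∈ sB, G a b • e (a, b) = 0 := by
    rw [← Finset.sum_product']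
    rw [← Finset.sum_subset hsub (fun p _ hp => by
      simp only [hG]
      rw [if_neg hp, zero_smul])]
    rw [← hsum]
    refine Finset.sum_congr rfl fun p hp => ?_
    simp only [hG, if_pos hp]
    rfl
  have key : ∀ (m₁ : σ →₀ ℕ) (m₂ : τ →₀ ℕ),
      ∑ a ∈ sA, (∑ b ∈ sB, G a b * coeff m₂ (v b)) * coeff m₁ (u a) = 0 := by
    intro m₁ m₂
    have := congrArg (coeff (embl m₁ + embr m₂)) hS
    rw [coeff_zero] at this
    rw [coeff_sum] at this
    calc ∑ a ∈ sA, (∑ b ∈ sB, G a b * coeff m₂ (v b)) * coeff m₁ (u a)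
        = ∑ a ∈ sA, ∑ b ∈ sB, G a b * (coeff m₁ (u a) * coeff m₂ (v b)) := by
          refine Finset.sum_congr rfl fun a _ => ?_
          rw [Finset.sum_mul]
          refine Finset.sum_congr rfl fun b _ => by ring
      _ = 0 := by
          rw [← this]
          refine Finset.sum_congr rfl fun a _ => ?_
          rw [coeff_sum]
          refine Finset.sum_congr rfl fun b _ => ?_
          rw [coeff_smul, coeff_rename_inl_mul_inr]
          rfl
  have hA : ∀ a ∈ sA, ∀ (m₂ : τ →₀ ℕ), ∑ b ∈ sB, G a b * coeff m₂ (v b) = 0 := by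
    intro a ha m₂
    refine linearIndependent_iff'.mp hu sA (fun a => ∑ b ∈ sB, G a b * coeff m₂ (v b)) ?_ a ha
    apply MvPolynomial.ext
    intro m₁
    rw [coeff_zero]
    rw [← key m₁ m₂]
    rw [coeff_sum]
    refine Finset.sum_congr rfl fun a _ => ?_
    rw [coeff_smul]
    rfl
  have hB : ∀ a ∈ sA, ∀ b ∈ sB, G a b = 0 := by
    intro a ha
    refine linearIndependent_iff'.mp hv sB (fun b => G a b) ?_
    apply MvPolynomial.ext
    intro m₂
    rw [coeff_zero, ← hA a ha m₂, coeff_sum]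
    refine Finset.sum_congr rfl fun b _ => ?_
    rw [coeff_smul]
    rfl
  have : G i.1 i.2 = 0 := hB i.1 (Finset.mem_image_of_mem _ hi) i.2 (Finset.mem_image_of_mem _ hi)
  simpa only [hG, Prod.mk.eta, if_pos hi] using this

end Products

section Kernel

variable {K : Type*} [Field K] {ι σ τ : Type*}

lemma aeval_elim_rename_inl (α : ι → MvPolynomial σ K) (β : ι → MvPolynomial τ K)
    (p : MvPolynomial ι K) :
    aeval (Sum.elim (fun i => rename Sum.inl (α i)) (fun i => rename Sum.inr (β i)))
        (rename (Sum.inl : ι → ι ⊕ ι) p)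
      = rename (Sum.inl : σ → σ ⊕ τ) (aeval α p) := by
  rw [aeval_rename]
  have : (Sum.elim (fun i => rename (Sum.inl : σ → σ ⊕ τ) (α i))
      (fun i => rename Sum.inr (β i))) ∘ (Sum.inl : ι → ι ⊕ ι)
      = fun i => rename (Sum.inl : σ → σ ⊕ τ) (α i) := rfl
  rw [this]
  have := MvPolynomial.comp_aeval (R := K) (f := α)
    (φ := (rename (Sum.inl : σ → σ ⊕ τ) : MvPolynomial σ K →ₐ[K] MvPolynomial (σ ⊕ τ) K))
  exact (congrFun (congrArg (fun (F : MvPolynomial ι K →ₐ[K] MvPolynomial (σ ⊕ τ) K) => F.toFun) this) p).symm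

lemma aeval_elim_rename_inr (α : ι → MvPolynomial σ K) (β : ι → MvPolynomial τ K)
    (p : MvPolynomial ι K) :
    aeval (Sum.elim (fun i => rename Sum.inl (α i)) (fun i => rename Sum.inr (β i)))
        (rename (Sum.inr : ι → ι ⊕ ι) p)
      = rename (Sum.inr : τ → σ ⊕ τ) (aeval β p) := by
  rw [aeval_rename]
  have : (Sum.elim (fun i => rename (Sum.inl : σ → σ ⊕ τ) (α i))
      (fun i => rename Sum.inr (β i))) ∘ (Sum.inr : ι → ι ⊕ ι)
      = fun i => rename (Sum.inr : τ → σ ⊕ τ) (β i) := rfl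
  rw [this]
  have := MvPolynomial.comp_aeval (R := K) (f := β)
    (φ := (rename (Sum.inr : τ → σ ⊕ τ) : MvPolynomial τ K →ₐ[K] MvPolynomial (σ ⊕ τ) K))
  exact (congrFun (congrArg (fun (F : MvPolynomial ι K →ₐ[K] MvPolynomial (σ ⊕ τ) K) => F.toFun) this) p).symm

lemma ker_aeval_sum_le (α : ι → MvPolynomial σ K) (β : ι → MvPolynomial τ K)
    (P : Ideal (MvPolynomial ι K))
    (hP : P = RingHom.ker (aeval α : MvPolynomial ι K →ₐ[K] _))
    (hB : P = RingHom.ker (aeval β : MvPolynomial ι K →ₐ[K] _)) :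
    RingHom.ker (aeval (Sum.elim (fun i => rename Sum.inl (α i)) (fun i => rename Sum.inr (β i)))
       : MvPolynomial (ι ⊕ ι) K →ₐ[K] MvPolynomial (σ ⊕ τ) K) ≤
      Ideal.span ((rename (Sum.inl : ι → ι ⊕ ι) '' (P : Set (MvPolynomial ι K))) ∪
        (rename (Sum.inr : ι → ι ⊕ ι) '' (P : Set (MvPolynomial ι K)))) := by
  classical
  set R := MvPolynomial ι K
  set γ : MvPolynomial (ι ⊕ ι) K →ₐ[K] MvPolynomial (σ ⊕ τ) K :=
    aeval (Sum.elim (fun i => rename Sum.inl (α i)) (fun i => rename Sum.inr (β i))) with hγ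
  set Q : Ideal (MvPolynomial (ι ⊕ ι) K) :=
    Ideal.span ((rename (Sum.inl : ι → ι ⊕ ι) '' (P : Set R)) ∪
        (rename (Sum.inr : ι → ι ⊕ ι) '' (P : Set R))) with hQ
  -- Q is contained in the kernel
  have hQker : Q ≤ RingHom.ker γ := by
    rw [hQ, Ideal.span_le]
    rintro x (⟨p, hp, rfl⟩ | ⟨p, hp, rfl⟩)
    · have : γ (rename Sum.inl p) = 0 := by
        rw [hγ, aeval_elim_rename_inl]
        have : aeval α p = 0 := by
          have := hP ▸ hp; exact RingHom.mem_ker.mp this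
        rw [this, map_zero]
      exact this
    · have : γ (rename Sum.inr p) = 0 := by
        rw [hγ, aeval_elim_rename_inr]
        have : aeval β p = 0 := by
          have := hB ▸ hp; exact RingHom.mem_ker.mp this
        rw [this, map_zero]
      exact this
  -- choose a complement of P
  obtain ⟨W, hW⟩ := Submodule.exists_isCompl (Submodule.restrictScalars K (P : Submodule R R))
  set bW := Module.Basis.ofVectorSpace K W with hbW
  set w : _ → R := fun a => ((bW a : W) : R) with hw
  have hwLI : LinearIndependent K w := bW.linearIndependent.map' W.subtype (Submodule.ker_subtype W)
  have hwspan : Submodule.span K (Set.range w) = W := by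
    have : Set.range w = W.subtype '' (Set.range bW) := by
      have h0 : w = W.subtype ∘ bW := rfl
      rw [h0, Set.range_comp]
    rw [this, Submodule.span_image, bW.span_eq, Submodule.map_top, Submodule.range_subtype]
  -- the products of basis vectors
  set e : _ × _ → MvPolynomial (ι ⊕ ι) K :=
    fun ab => rename (Sum.inl : ι → ι ⊕ ι) (w ab.1) * rename (Sum.inr : ι → ι ⊕ ι) (w ab.2)
    with he
  -- γ is injective on the span of the products
  have hkerα : LinearMap.ker (aeval α : MvPolynomial ι K →ₐ[K] _).toLinearMap
      = Submodule.restrictScalars K (P : Submodule R R) := by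
    ext x
    simp only [LinearMap.mem_ker, AlgHom.toLinearMap_apply, Submodule.restrictScalars_mem]
    rw [hP]; exact RingHom.mem_ker.symm
  have hkerβ : LinearMap.ker (aeval β : MvPolynomial ι K →ₐ[K] _).toLinearMap
      = Submodule.restrictScalars K (P : Submodule R R) := by
    ext x
    simp only [LinearMap.mem_ker, AlgHom.toLinearMap_apply, Submodule.restrictScalars_mem]
    rw [hB]; exact RingHom.mem_ker.symm
  have huLI : LinearIndependent K (fun a => aeval α (w a)) := by
    have := hwLI.map (f := (aeval α : MvPolynomial ι K →ₐ[K] _).toLinearMap)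
      (by rw [hwspan, hkerα]; exact hW.disjoint.symm)
    exact this
  have hvLI : LinearIndependent K (fun a => aeval β (w a)) := by
    have := hwLI.map (f := (aeval β : MvPolynomial ι K →ₐ[K] _).toLinearMap)
      (by rw [hwspan, hkerβ]; exact hW.disjoint.symm)
    exact this
  have hLI : LinearIndependent K (fun ab => γ (e ab)) := by
    have h1 := linearIndependent_mul_rename (σ := σ) (τ := τ) huLI hvLI
    have : (fun ab => γ (e ab)) = fun p =>
        rename Sum.inl (aeval α (w p.1)) * rename (Sum.inr : τ → σ ⊕ τ) (aeval β (w p.2)) := by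
      funext ab
      rw [he, hγ]
      simp only [map_mul]
      rw [aeval_elim_rename_inl, aeval_elim_rename_inr]
    rw [this]
    exact h1
  -- every element decomposes
  have hdecomp : ∀ f : MvPolynomial (ι ⊕ ι) K,
      f ∈ (Submodule.restrictScalars K (Q : Submodule _ _)) ⊔
        Submodule.span K (Set.range e) := by
    have hmono : ∀ (m : (ι ⊕ ι) →₀ ℕ) (c : K), (monomial m c : MvPolynomial (ι ⊕ ι) K)
        ∈ (Submodule.restrictScalars K (Q : Submodule _ _)) ⊔ Submodule.span K (Set.range e) := by
      intro m c
      set m₁ := m.comapDomain (Sum.inl : ι → ι ⊕ ι) Sum.inl_injective.injOn with hm₁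
      set m₂ := m.comapDomain (Sum.inr : ι → ι ⊕ ι) Sum.inr_injective.injOn with hm₂
      have hsplit : (monomial m c : MvPolynomial (ι ⊕ ι) K)
          = rename (Sum.inl : ι → ι ⊕ ι) (monomial m₁ c)
            * rename (Sum.inr : ι → ι ⊕ ι) (monomial m₂ 1) := by
        rw [rename_monomial, rename_monomial, monomial_mul, mul_one]
        have hme := embl_add_embr_eq (A := ι) (B := ι) m
        simp only [embl, embr] at hme
        rw [hm₁, hm₂, hme]
      -- decompose the two monomials
      have hg1 : (monomial m₁ c : R) ∈ (Submodule.restrictScalars K (P : Submodule R R)) ⊔ W := by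
        rw [hW.codisjoint.eq_top]; trivial
      have hg2 : (monomial m₂ (1:K) : R) ∈
          (Submodule.restrictScalars K (P : Submodule R R)) ⊔ W := by
        rw [hW.codisjoint.eq_top]; trivial
      obtain ⟨p₁, hp₁, w₁, hw₁, hpw₁⟩ := Submodule.mem_sup.mp hg1
      obtain ⟨p₂, hp₂, w₂, hw₂, hpw₂⟩ := Submodule.mem_sup.mp hg2
      rw [hsplit, ← hpw₁, ← hpw₂]
      have expand : rename (Sum.inl : ι → ι ⊕ ι) (p₁ + w₁) * rename (Sum.inr : ι → ι ⊕ ι) (p₂ + w₂)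
          = rename (Sum.inl : ι → ι ⊕ ι) p₁ * rename (Sum.inr : ι → ι ⊕ ι) (p₂ + w₂)
            + rename (Sum.inl : ι → ι ⊕ ι) w₁ * rename (Sum.inr : ι → ι ⊕ ι) p₂
            + rename (Sum.inl : ι → ι ⊕ ι) w₁ * rename (Sum.inr : ι → ι ⊕ ι) w₂ := by
        rw [map_add, map_add]; ring
      rw [expand]
      refine Submodule.add_mem _ (Submodule.add_mem _ ?_ ?_) ?_
      · apply Submodule.mem_sup_left
        show _ ∈ Q
        apply Ideal.mul_mem_right
        apply Ideal.subset_span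
        exact Or.inl ⟨p₁, hp₁, rfl⟩
      · apply Submodule.mem_sup_left
        show _ ∈ Q
        apply Ideal.mul_mem_left
        apply Ideal.subset_span
        exact Or.inr ⟨p₂, hp₂, rfl⟩
      · apply Submodule.mem_sup_right
        -- product of two elements of W is in the span of the products e
        have hWmul : ∀ x ∈ W, ∀ y ∈ W,
            rename (Sum.inl : ι → ι ⊕ ι) x * rename (Sum.inr : ι → ι ⊕ ι) y
              ∈ Submodule.span K (Set.range e) := by
          intro x hx y hy
          have hxs : x ∈ Submodule.span K (Set.range w) := by rw [hwspan]; exact hx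
          have hys : y ∈ Submodule.span K (Set.range w) := by rw [hwspan]; exact hy
          -- bilinear induction
          refine Submodule.span_induction (p := fun x _ =>
            rename (Sum.inl : ι → ι ⊕ ι) x * rename (Sum.inr : ι → ι ⊕ ι) y
              ∈ Submodule.span K (Set.range e)) ?_ ?_ ?_ ?_ hxs
          · rintro _ ⟨a, rfl⟩
            -- now x is a basis vector; induct on y
            refine Submodule.span_induction (p := fun y _ =>
              rename (Sum.inl : ι → ι ⊕ ι) (w a) * rename (Sum.inr : ι → ι ⊕ ι) y
                ∈ Submodule.span K (Set.range e)) ?_ ?_ ?_ ?_ hys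
            · rintro _ ⟨b, rfl⟩
              exact Submodule.subset_span ⟨(a, b), rfl⟩
            · simp
            · intro y₁ y₂ _ _ h1 h2
              rw [map_add, mul_add]
              exact Submodule.add_mem _ h1 h2
            · intro c y₁ _ h1
              rw [map_smul, mul_smul_comm]
              exact Submodule.smul_mem _ _ h1
          · simp
          · intro x₁ x₂ _ _ h1 h2
            rw [map_add, add_mul]
            exact Submodule.add_mem _ h1 h2
          · intro c x₁ _ h1
            rw [map_smul, smul_mul_assoc]
            exact Submodule.smul_mem _ _ h1
        exact hWmul _ hw₁ _ hw₂
    intro f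
    rw [as_sum f]
    exact Submodule.sum_mem _ fun m _ => hmono m (coeff m f)
  -- conclude
  intro f hf
  obtain ⟨q, hq, u, hu, hqu⟩ := Submodule.mem_sup.mp (hdecomp f)
  have hγu : γ u = 0 := by
    have hγq : γ q = 0 := RingHom.mem_ker.mp (hQker hq)
    have : γ f = 0 := RingHom.mem_ker.mp hf
    rw [← hqu, map_add, hγq, zero_add] at this
    exact this
  have hu0 : u = 0 := by
    obtain ⟨l, hl⟩ := Finsupp.mem_span_range_iff_exists_finsupp.mp hu
    have hl0 : l = 0 := by
      apply linearIndependent_iff.mp hLI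
      rw [Finsupp.linearCombination_apply]
      have : (l.sum fun i c => c • γ (e i)) = γ (l.sum fun i c => c • e i) := by
        rw [map_finsuppSum]
        refine Finsupp.sum_congr fun i _ => ?_
        rw [map_smul]
      rw [this, hl, hγu]
    rw [← hl, hl0, Finsupp.sum_zero_index]
  rw [← hqu, hu0, add_zero]
  exact hq

end Kernel

section Trunc

open scoped Classical

variable {K : Type*} [Field K] {ι : Type*} [Fintype ι]

lemma degree_add_fin {A : Type*} [Fintype A] (a b : A →₀ ℕ) :
    (a + b).degree = a.degree + b.degree := by
  rw [degree_eq_sum_fintype, degree_eq_sum_fintype, degree_eq_sum_fintype]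
  simp [Finset.sum_add_distrib]

/-- filter a polynomial by a predicate on monomials -/
noncomputable def psiF {σ : Type*} (pred : (σ →₀ ℕ) → Prop)
    (f : MvPolynomial σ K) : MvPolynomial σ K :=
  AddMonoidAlgebra.ofCoeff (Finsupp.filter pred (AddMonoidAlgebra.coeff f))

lemma coeff_psiF {σ : Type*} (pred : (σ →₀ ℕ) → Prop)
    (f : MvPolynomial σ K) (m : σ →₀ ℕ) :
    coeff m (psiF pred f) = if pred m then coeff m f else 0 := by
  rw [psiF]
  convert Finsupp.filter_apply (p := pred) m (f := AddMonoidAlgebra.coeff f) using 2 <;> rfl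

lemma psiF_add {σ : Type*} (pred : (σ →₀ ℕ) → Prop) (f g : MvPolynomial σ K) :
    psiF pred (f + g) = psiF pred f + psiF pred g := by
  apply MvPolynomial.ext; intro m
  simp only [coeff_psiF, coeff_add]
  split_ifs <;> simp

lemma psiF_zero {σ : Type*} (pred : (σ →₀ ℕ) → Prop) :
    psiF pred (0 : MvPolynomial σ K) = 0 := by
  apply MvPolynomial.ext; intro m
  simp only [coeff_psiF, coeff_zero]
  split_ifs <;> simp

lemma psiF_sum {σ A : Type*} (pred : (σ →₀ ℕ) → Prop) (s : Finset A)
    (g : A → MvPolynomial σ K) :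
    psiF pred (∑ a ∈ s, g a) = ∑ a ∈ s, psiF pred (g a) := by
  induction s using Finset.cons_induction with
  | empty => simp [psiF_zero]
  | cons a s ha ih => rw [Finset.sum_cons, Finset.sum_cons, psiF_add, ih]

/-- the main truncation predicate -/
def predM (d : ℕ) (m : (ι ⊕ ι) →₀ ℕ) : Prop := tdeg m ≠ 0 ∧ udeg m ≠ 0 ∧ m.degree = d

def predL (d j : ℕ) (a : (ι ⊕ ι) →₀ ℕ) : Prop :=
  tdeg a + j ≠ 0 ∧ udeg a ≠ 0 ∧ a.degree + j = d

def predR (d j : ℕ) (a : (ι ⊕ ι) →₀ ℕ) : Prop :=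
  tdeg a ≠ 0 ∧ udeg a + j ≠ 0 ∧ a.degree + j = d

lemma ml_left (d j : ℕ) (h : MvPolynomial (ι ⊕ ι) K) (n₀ : ι →₀ ℕ) (c : K)
    (hdeg : n₀.degree = j) :
    psiF (predM d) (h * monomial (embl n₀) c)
      = psiF (predL d j) h * monomial (embl n₀) c := by
  apply MvPolynomial.ext; intro m
  rw [coeff_psiF, coeff_mul_monomial', coeff_mul_monomial', coeff_psiF]
  by_cases hle : embl n₀ ≤ m
  · rw [if_pos hle, if_pos hle]
    have hmb : m - embl n₀ + embl n₀ = m := tsub_add_cancel_of_le hle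
    have e1 : tdeg m = tdeg (m - embl n₀) + j := by
      conv_lhs => rw [← hmb]
      rw [tdeg_add, tdeg_embl, hdeg]
    have e2 : udeg m = udeg (m - embl n₀) := by
      conv_lhs => rw [← hmb]
      rw [udeg_add, udeg_embl, add_zero]
    have e3 : m.degree = (m - embl n₀).degree + j := by
      conv_lhs => rw [← hmb]
      rw [degree_add_fin, degree_eq_tdeg_add_udeg (embl n₀), tdeg_embl, udeg_embl, hdeg, add_zero]
    have hiff : predM d m ↔ predL d j (m - embl n₀) := by
      unfold predM predL
      rw [e1, e2, e3]
    rw [if_congr hiff rfl rfl, ite_mul, zero_mul]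
  · rw [if_neg hle, if_neg hle, ite_self]

lemma ml_right (d j : ℕ) (h : MvPolynomial (ι ⊕ ι) K) (n₀ : ι →₀ ℕ) (c : K)
    (hdeg : n₀.degree = j) :
    psiF (predM d) (h * monomial (embr n₀) c)
      = psiF (predR d j) h * monomial (embr n₀) c := by
  apply MvPolynomial.ext; intro m
  rw [coeff_psiF, coeff_mul_monomial', coeff_mul_monomial', coeff_psiF]
  by_cases hle : embr n₀ ≤ m
  · rw [if_pos hle, if_pos hle]
    have hmb : m - embr n₀ + embr n₀ = m := tsub_add_cancel_of_le hle
    have e1 : tdeg m = tdeg (m - embr n₀) := by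
      conv_lhs => rw [← hmb]
      rw [tdeg_add, tdeg_embr, add_zero]
    have e2 : udeg m = udeg (m - embr n₀) + j := by
      conv_lhs => rw [← hmb]
      rw [udeg_add, udeg_embr, hdeg]
    have e3 : m.degree = (m - embr n₀).degree + j := by
      conv_lhs => rw [← hmb]
      rw [degree_add_fin, degree_eq_tdeg_add_udeg (embr n₀), tdeg_embr, udeg_embr, hdeg, zero_add]
    have hiff : predM d m ↔ predR d j (m - embr n₀) := by
      unfold predM predR
      rw [e1, e2, e3]
    rw [if_congr hiff rfl rfl, ite_mul, zero_mul]
  · rw [if_neg hle, if_neg hle, ite_self]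

lemma psiF_predL_eq_zero (d j : ℕ) (hj : d ≤ j) (h : MvPolynomial (ι ⊕ ι) K) :
    psiF (predL d j) h = 0 := by
  apply MvPolynomial.ext; intro m
  rw [coeff_psiF, coeff_zero, if_neg]
  rintro ⟨-, h2, h3⟩
  have h4 : udeg m ≤ m.degree := by
    rw [degree_eq_tdeg_add_udeg]; omega
  omega

lemma psiF_predR_eq_zero (d j : ℕ) (hj : d ≤ j) (h : MvPolynomial (ι ⊕ ι) K) :
    psiF (predR d j) h = 0 := by
  apply MvPolynomial.ext; intro m
  rw [coeff_psiF, coeff_zero, if_neg]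
  rintro ⟨h1, -, h3⟩
  have h4 : tdeg m ≤ m.degree := by
    rw [degree_eq_tdeg_add_udeg]; omega
  omega

lemma rename_inl_as_sum (p : MvPolynomial ι K) :
    rename (Sum.inl : ι → ι ⊕ ι) p
      = ∑ n₀ ∈ p.support, monomial (embl n₀) (coeff n₀ p) := by
  conv_lhs => rw [as_sum p]
  rw [map_sum]
  exact Finset.sum_congr rfl fun n₀ _ => rename_monomial _ _ _

lemma rename_inr_as_sum (p : MvPolynomial ι K) :
    rename (Sum.inr : ι → ι ⊕ ι) p
      = ∑ n₀ ∈ p.support, monomial (embr n₀) (coeff n₀ p) := by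
  conv_lhs => rw [as_sum p]
  rw [map_sum]
  exact Finset.sum_congr rfl fun n₀ _ => rename_monomial _ _ _

lemma mlH_left (d j : ℕ) (h : MvPolynomial (ι ⊕ ι) K) {p : MvPolynomial ι K}
    (hp : p.IsHomogeneous j) :
    psiF (predM d) (h * rename (Sum.inl : ι → ι ⊕ ι) p)
      = psiF (predL d j) h * rename (Sum.inl : ι → ι ⊕ ι) p := by
  rw [rename_inl_as_sum, Finset.mul_sum, psiF_sum, Finset.mul_sum]
  refine Finset.sum_congr rfl fun n₀ hn₀ => ?_
  refine ml_left d j h n₀ _ ?_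
  by_contra hne
  exact (MvPolynomial.mem_support_iff.mp hn₀) (hp.coeff_eq_zero hne)

lemma mlH_right (d j : ℕ) (h : MvPolynomial (ι ⊕ ι) K) {p : MvPolynomial ι K}
    (hp : p.IsHomogeneous j) :
    psiF (predM d) (h * rename (Sum.inr : ι → ι ⊕ ι) p)
      = psiF (predR d j) h * rename (Sum.inr : ι → ι ⊕ ι) p := by
  rw [rename_inr_as_sum, Finset.mul_sum, psiF_sum, Finset.mul_sum]
  refine Finset.sum_congr rfl fun n₀ hn₀ => ?_
  refine ml_right d j h n₀ _ ?_
  by_contra hne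
  exact (MvPolynomial.mem_support_iff.mp hn₀) (hp.coeff_eq_zero hne)

/-- The key truncation membership lemma -/
lemma mem_JJ (P : Ideal (MvPolynomial ι K))
    (hhom : ∀ p ∈ P, ∀ k : ℕ, homogeneousComponent k p ∈ P)
    (h0 : ∀ p ∈ P, p.IsHomogeneous 0 → p = 0) (d : ℕ)
    (f : MvPolynomial (ι ⊕ ι) K)
    (hf : f ∈ Ideal.span ((rename (Sum.inl : ι → ι ⊕ ι) '' (P : Set (MvPolynomial ι K))) ∪
        (rename (Sum.inr : ι → ι ⊕ ι) '' (P : Set (MvPolynomial ι K)))))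
    (hsupp : ∀ m ∈ f.support, predM (ι := ι) d m) :
    f ∈ Ideal.span
      ((rename (Sum.inl : ι → ι ⊕ ι) ''
          {q : MvPolynomial ι K | q ∈ P ∧ ∃ k, 0 < k ∧ k < d ∧ q.IsHomogeneous k}) ∪
       (rename (Sum.inr : ι → ι ⊕ ι) ''
          {q : MvPolynomial ι K | q ∈ P ∧ ∃ k, 0 < k ∧ k < d ∧ q.IsHomogeneous k})) := by
  set S : Set (MvPolynomial ι K) :=
    {q : MvPolynomial ι K | q ∈ P ∧ ∃ k, 0 < k ∧ k < d ∧ q.IsHomogeneous k} with hS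
  set JJ : Ideal (MvPolynomial (ι ⊕ ι) K) :=
    Ideal.span ((rename (Sum.inl : ι → ι ⊕ ι) '' S) ∪ (rename (Sum.inr : ι → ι ⊕ ι) '' S))
    with hJJ
  have key : ∀ x ∈ Ideal.span
      ((rename (Sum.inl : ι → ι ⊕ ι) '' (P : Set (MvPolynomial ι K))) ∪
        (rename (Sum.inr : ι → ι ⊕ ι) '' (P : Set (MvPolynomial ι K)))),
      ∀ h : MvPolynomial (ι ⊕ ι) K, psiF (predM d) (h * x) ∈ JJ := by
    intro x hx
    refine Submodule.span_induction ?_ ?_ ?_ ?_ hx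
    · rintro _ (⟨q, hq, rfl⟩ | ⟨q, hq, rfl⟩) <;> intro h
      · -- left generators
        have hsum := sum_homogeneousComponent q
        nth_rewrite 1 [← hsum]
        rw [map_sum, Finset.mul_sum, psiF_sum]
        refine Submodule.sum_mem _ fun k _ => ?_
        have hk_mem : homogeneousComponent k q ∈ P := hhom q hq k
        have hk_hom : (homogeneousComponent k q).IsHomogeneous k :=
          homogeneousComponent_isHomogeneous k q
        rcases Nat.eq_zero_or_pos k with hk0 | hkpos
        · subst hk0
          rw [h0 _ hk_mem hk_hom, map_zero, mul_zero, psiF_zero]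
          exact Submodule.zero_mem _
        rcases lt_or_ge k d with hkd | hkd
        · rw [mlH_left d k h hk_hom]
          apply Ideal.mul_mem_left
          apply Ideal.subset_span
          exact Or.inl ⟨_, ⟨hk_mem, k, hkpos, hkd, hk_hom⟩, rfl⟩
        · rw [mlH_left d k h hk_hom, psiF_predL_eq_zero d k hkd, zero_mul]
          exact Submodule.zero_mem _
      · -- right generators
        have hsum := sum_homogeneousComponent q
        nth_rewrite 1 [← hsum]
        rw [map_sum, Finset.mul_sum, psiF_sum]
        refine Submodule.sum_mem _ fun k _ => ?_
        have hk_mem : homogeneousComponent k q ∈ P := hhom q hq k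
        have hk_hom : (homogeneousComponent k q).IsHomogeneous k :=
          homogeneousComponent_isHomogeneous k q
        rcases Nat.eq_zero_or_pos k with hk0 | hkpos
        · subst hk0
          rw [h0 _ hk_mem hk_hom, map_zero, mul_zero, psiF_zero]
          exact Submodule.zero_mem _
        rcases lt_or_ge k d with hkd | hkd
        · rw [mlH_right d k h hk_hom]
          apply Ideal.mul_mem_left
          apply Ideal.subset_span
          exact Or.inr ⟨_, ⟨hk_mem, k, hkpos, hkd, hk_hom⟩, rfl⟩
        · rw [mlH_right d k h hk_hom, psiF_predR_eq_zero d k hkd, zero_mul]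
          exact Submodule.zero_mem _
    · intro h
      rw [mul_zero, psiF_zero]
      exact Submodule.zero_mem _
    · intro x y _ _ hx' hy' h
      rw [mul_add, psiF_add]
      exact Submodule.add_mem _ (hx' h) (hy' h)
    · intro a x _ hx' h
      rw [smul_eq_mul, ← mul_assoc]
      exact hx' (h * a)
  have hpsi : psiF (predM d) f = f := by
    apply MvPolynomial.ext; intro m
    rw [coeff_psiF]
    by_cases hm : m ∈ f.support
    · rw [if_pos (hsupp m hm)]
    · rw [MvPolynomial.notMem_support_iff.mp hm, ite_self]
  have := key f hf 1
  rw [one_mul, hpsi] at this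
  exact this

end Trunc

section Additive

variable {K : Type*} [Field K] {ι : Type*} [Fintype ι]

/-- evaluating the variables at `C (X i)` is just `Polynomial.C` -/
lemma aeval_CX (g : MvPolynomial ι K) :
    aeval (fun i => (Polynomial.C (MvPolynomial.X i) : Polynomial (MvPolynomial ι K))) g
      = Polynomial.C g := by
  induction g using MvPolynomial.induction_on with
  | C a => rw [aeval_C, Polynomial.algebraMap_apply, MvPolynomial.algebraMap_eq]
  | add p q hp hq => rw [map_add, map_add, hp, hq]
  | mul_X p i hp => rw [map_mul, hp, aeval_X, ← Polynomial.C_mul]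

/-- The master coefficient identity extracted from additivity of `f`. -/
lemma master_coeff (f : MvPolynomial ι K)
    (hadd : aeval (fun i => X (Sum.inl i) + X (Sum.inr i)) f
      = rename (Sum.inl : ι → ι ⊕ ι) f + rename (Sum.inr : ι → ι ⊕ ι) f)
    (j : ι) (k : ℕ) (hk : 1 ≤ k) (m₀ : ι →₀ ℕ) :
    (coeff m₀ f) * (((m₀ j).choose k : K))
      = if m₀ = Finsupp.single j k then coeff m₀ f else 0 := by
  classical
  set E : MvPolynomial (ι ⊕ ι) K →ₐ[K] Polynomial (MvPolynomial ι K) :=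
    aeval (Sum.elim (fun i => Polynomial.C (MvPolynomial.X i))
      (fun i => if i = j then Polynomial.X * Polynomial.C (MvPolynomial.X j) else 0)) with hE
  set w : ι → Polynomial (MvPolynomial ι K) := fun i =>
    Polynomial.C (MvPolynomial.X i)
      + (if i = j then Polynomial.X * Polynomial.C (MvPolynomial.X j) else 0) with hw
  -- LHS computation
  have h1 : E (aeval (fun i => X (Sum.inl i) + X (Sum.inr i)) f) = aeval w f := by
    have hcomp := MvPolynomial.comp_aeval
      (f := fun i => (X (Sum.inl i) + X (Sum.inr i) : MvPolynomial (ι ⊕ ι) K)) (φ := E)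
    have happ : (E.comp (aeval fun i => (X (Sum.inl i) + X (Sum.inr i) :
        MvPolynomial (ι ⊕ ι) K))) f = E (aeval (fun i => X (Sum.inl i) + X (Sum.inr i)) f) := rfl
    rw [← happ, hcomp]
    have hfun : (fun i => E (X (Sum.inl i) + X (Sum.inr i))) = w := by
      funext i
      rw [map_add, hE, aeval_X, aeval_X]
      rfl
    rw [hfun]
  have w_eq : ∀ i, w i = Polynomial.C (MvPolynomial.X i)
      * (if i = j then 1 + Polynomial.X else 1) := by
    intro i
    simp only [hw]
    by_cases hij : i = j
    · rw [if_pos hij, if_pos hij]; subst hij; ring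
    · rw [if_neg hij, if_neg hij, add_zero, mul_one]
  have h2 : aeval w f = ∑ m ∈ f.support,
      Polynomial.C (monomial m (coeff m f)) * (1 + Polynomial.X) ^ (m j) := by
    conv_lhs => rw [as_sum f]
    rw [map_sum]
    refine Finset.sum_congr rfl fun m _ => ?_
    rw [aeval_monomial]
    have hprod : (m.prod fun i e => (w i) ^ e)
        = Polynomial.C (∏ i ∈ m.support, MvPolynomial.X i ^ m i)
            * (1 + Polynomial.X) ^ (m j) := by
      rw [Finsupp.prod]
      have : ∀ i ∈ m.support, (w i) ^ m i
          = (Polynomial.C (MvPolynomial.X i)) ^ m i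
            * (if i = j then 1 + Polynomial.X else 1) ^ m i := by
        intro i _
        rw [w_eq i, mul_pow]
      rw [Finset.prod_congr rfl this, Finset.prod_mul_distrib]
      congr 1
      · rw [map_prod]
        exact Finset.prod_congr rfl fun i _ => (map_pow _ _ _).symm
      · by_cases hj : j ∈ m.support
        · rw [Finset.prod_eq_single_of_mem j hj (fun i _ hij => by rw [if_neg hij, one_pow]),
            if_pos rfl]
        · rw [Finset.prod_congr rfl (fun i hi => by
            rw [if_neg (fun hij => hj (by rw [← hij]; exact hi)), one_pow]), Finset.prod_const_one,
            Finsupp.notMem_support_iff.mp hj, pow_zero]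
    rw [hprod]
    rw [← mul_assoc]
    congr 1
    rw [Polynomial.algebraMap_apply, MvPolynomial.algebraMap_eq, ← Polynomial.C_mul]
    congr 1
    rw [monomial_eq, Finsupp.prod]
  have hLHS : coeff m₀ ((E (aeval (fun i => X (Sum.inl i) + X (Sum.inr i)) f)).coeff k)
      = coeff m₀ f * (((m₀ j).choose k : K)) := by
    rw [h1, h2, Polynomial.finset_sum_coeff]
    have : ∀ m ∈ f.support,
        (Polynomial.C (monomial m (coeff m f)) * (1 + Polynomial.X) ^ (m j)).coeff k
          = monomial m (coeff m f * (((m j).choose k : K))) := by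
      intro m _
      rw [Polynomial.coeff_C_mul, Polynomial.coeff_one_add_X_pow]
      rw [← map_natCast (MvPolynomial.C (σ := ι)) ((m j).choose k), mul_comm,
        C_mul_monomial, mul_comm (((m j).choose k : K))]
    rw [Finset.sum_congr rfl this]
    have hcoeff : ∀ m ∈ f.support, coeff m₀ (monomial m (coeff m f * (((m j).choose k : K))))
        = if m = m₀ then coeff m f * (((m j).choose k : K)) else 0 := by
      intro m _
      rw [coeff_monomial]
    rw [coeff_sum, Finset.sum_congr rfl hcoeff, Finset.sum_ite_eq' f.support m₀
      (fun m => coeff m f * (((m j).choose k : K)))]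
    by_cases hm : m₀ ∈ f.support
    · rw [if_pos hm]
    · rw [if_neg hm, MvPolynomial.notMem_support_iff.mp hm, zero_mul]
  -- RHS computation
  have h4 : E (rename (Sum.inl : ι → ι ⊕ ι) f) = Polynomial.C f := by
    rw [hE, aeval_rename]
    exact aeval_CX f
  have h5 : coeff m₀ ((E (rename (Sum.inr : ι → ι ⊕ ι) f)).coeff k)
      = if m₀ = Finsupp.single j k then coeff m₀ f else 0 := by
    rw [hE, aeval_rename]
    have helim : (Sum.elim (fun i => Polynomial.C (MvPolynomial.X i : MvPolynomial ι K))
        (fun i => if i = j then Polynomial.X * Polynomial.C (MvPolynomial.X j : MvPolynomial ι K)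
          else 0)) ∘ (Sum.inr : ι → ι ⊕ ι)
        = fun i => if i = j then Polynomial.X * Polynomial.C (MvPolynomial.X j : MvPolynomial ι K)
          else 0 := rfl
    rw [helim]
    set v : ι → Polynomial (MvPolynomial ι K) :=
      fun i => if i = j then Polynomial.X * Polynomial.C (MvPolynomial.X j) else 0 with hv
    have hterm : ∀ m : ι →₀ ℕ, ∀ c : K,
        coeff m₀ ((aeval v (monomial m c) : Polynomial (MvPolynomial ι K)).coeff k)
          = if m = Finsupp.single j k ∧ m₀ = Finsupp.single j k then c else 0 := by
      intro m c
      rw [aeval_monomial]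
      by_cases hsub : m.support ⊆ {j}
      · have hm : m = Finsupp.single j (m j) := Finsupp.support_subset_singleton.mp hsub
        have hprod : (m.prod fun i e => (v i) ^ e)
            = (Polynomial.X * Polynomial.C (MvPolynomial.X j)) ^ (m j) := by
          conv_lhs => rw [hm]
          rw [Finsupp.prod_single_index (by rw [pow_zero])]
          simp [hv]
        rw [hprod, mul_pow, ← map_pow, Polynomial.algebraMap_apply, MvPolynomial.algebraMap_eq]
        have : (Polynomial.C (MvPolynomial.C c) : Polynomial (MvPolynomial ι K))
            * (Polynomial.X ^ (m j) * Polynomial.C (MvPolynomial.X j ^ (m j)))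
            = Polynomial.C (MvPolynomial.C c * MvPolynomial.X j ^ (m j))
              * Polynomial.X ^ (m j) := by
          rw [Polynomial.C_mul]; ring
        rw [this, Polynomial.coeff_C_mul, Polynomial.coeff_X_pow]
        by_cases hkj : k = m j
        · rw [if_pos hkj, mul_one]
          have hXp : (MvPolynomial.C c * MvPolynomial.X j ^ (m j) : MvPolynomial ι K)
              = monomial (Finsupp.single j (m j)) c := by
            rw [X_pow_eq_monomial, C_mul_monomial, mul_one]
          rw [hXp, coeff_monomial]
          have hmeq : m = Finsupp.single j k := by rw [hm, hkj]
          by_cases hm₀ : Finsupp.single j (m j) = m₀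
          · rw [if_pos hm₀, if_pos ⟨hmeq, by rw [← hm₀, hkj]⟩]
          · rw [if_neg hm₀, if_neg]
            rintro ⟨-, hc2⟩
            exact hm₀ (by rw [← hkj]; exact hc2.symm)
        · rw [if_neg hkj, mul_zero, coeff_zero, if_neg]
          rintro ⟨hc, -⟩
          apply hkj
          rw [hc] at hm ⊢
          have := congrArg (fun g => g j) hm
          simpa using this.symm
      · obtain ⟨i, hi, hij⟩ : ∃ i ∈ m.support, i ≠ j := by
          by_contra hc
          push_neg at hc
          exact hsub fun i hi => Finset.mem_singleton.mpr (hc i hi)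
        have hprod : (m.prod fun i e => (v i) ^ e) = 0 := by
          rw [Finsupp.prod]
          apply Finset.prod_eq_zero hi
          rw [hv]
          simp only [if_neg hij]
          exact zero_pow (Finsupp.mem_support_iff.mp hi)
        rw [hprod, mul_zero, Polynomial.coeff_zero, coeff_zero, if_neg]
        rintro ⟨hc, -⟩
        rw [hc] at hsub
        exact hsub Finsupp.support_single_subset
    conv_lhs => rw [as_sum f]
    rw [map_sum, Polynomial.finset_sum_coeff, coeff_sum]
    rw [Finset.sum_congr rfl (fun m _ => hterm m (coeff m f))]
    by_cases hm₀ : m₀ = Finsupp.single j k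
    · rw [if_pos hm₀]
      have : ∀ m ∈ f.support, (if m = Finsupp.single j k ∧ m₀ = Finsupp.single j k
          then coeff m f else 0) = if m = m₀ then coeff m f else 0 := by
        intro m _
        by_cases hm : m = m₀
        · rw [if_pos hm, if_pos ⟨hm.trans hm₀, hm₀⟩]
        · rw [if_neg hm, if_neg (fun hc => hm (hc.1.trans hm₀.symm))]
      rw [Finset.sum_congr rfl this, Finset.sum_ite_eq' f.support m₀ (fun m => coeff m f)]
      by_cases hmem : m₀ ∈ f.support
      · rw [if_pos hmem]
      · rw [if_neg hmem, MvPolynomial.notMem_support_iff.mp hmem]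
    · rw [if_neg hm₀]
      rw [Finset.sum_congr rfl (fun m _ => if_neg (fun hc => hm₀ hc.2)), Finset.sum_const_zero]
  -- combine
  have H := congrArg (fun q => coeff m₀ ((E q).coeff k)) hadd
  simp only [map_add, Polynomial.coeff_add] at H
  rw [MvPolynomial.coeff_add] at H
  rw [h4] at H
  rw [Polynomial.coeff_C, if_neg (show ¬k = 0 by omega)] at H
  rw [MvPolynomial.coeff_zero, zero_add] at H
  rw [hLHS, h5] at H
  convert H using 2


lemma degree_single {j : ι} {t : ℕ} : (Finsupp.single j t).degree = t := by
  classical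
  rw [degree_eq_sum_fintype]
  rw [Finset.sum_congr rfl (fun i _ => Finsupp.single_apply (a := j) (b := t) (a' := i))]
  rw [Finset.sum_ite_eq (Finset.univ) j (fun _ => t)]
  simp

lemma additive_classify (f : MvPolynomial ι K) {d : ℕ} (hd : 1 ≤ d)
    (hf : f.IsHomogeneous d)
    (hadd : aeval (fun i => X (Sum.inl i) + X (Sum.inr i)) f
      = rename (Sum.inl : ι → ι ⊕ ι) f + rename (Sum.inr : ι → ι ⊕ ι) f) :
    ∀ m ∈ f.support, (∃ j, m = Finsupp.single j d)
      ∧ (∀ k, 0 < k → k < d → ((d.choose k : K) = 0)) := by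
  classical
  intro m hm
  have hc : coeff m f ≠ 0 := MvPolynomial.mem_support_iff.mp hm
  have hdeg : m.degree = d := by
    by_contra h; exact hc (hf.coeff_eq_zero h)
  have hex : ∃ j, m j ≠ 0 := by
    by_contra hno; push_neg at hno
    have hm0 : m = 0 := Finsupp.ext hno
    rw [hm0, map_zero] at hdeg; omega
  obtain ⟨j, hj⟩ := hex
  have hmaster := master_coeff f hadd j (m j) (Nat.one_le_iff_ne_zero.mpr hj) m
  rw [Nat.choose_self, Nat.cast_one, mul_one] at hmaster
  have hmeq : m = Finsupp.single j (m j) := by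
    by_contra hne
    rw [if_neg hne] at hmaster
    exact hc hmaster
  have hmj : m j = d := by
    have h1 : m.degree = m j := by
      conv_lhs => rw [hmeq]
      exact degree_single
    omega
  refine ⟨⟨j, by rw [hmeq, hmj]⟩, ?_⟩
  intro k hk0 hkd
  have h2 := master_coeff f hadd j k (by omega) m
  rw [if_neg (by
    intro hcon
    have := congrArg (fun g => g j) hcon
    simp only [Finsupp.single_eq_same] at this
    omega)] at h2
  rw [hmj] at h2
  rcases mul_eq_zero.mp h2 with h | h
  · exact absurd h hc
  · exact h

end Additive

section Frobenius

variable {K : Type*} [Field K] {ι : Type*} [Fintype ι]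

/-- `(a+b)^d = a^d + b^d` in any commutative `K`-algebra, when the middle binomial
coefficients vanish in `K`. -/
lemma add_pow_eq_of_bin {d : ℕ} (hd : 1 ≤ d)
    (hbin : ∀ k, 0 < k → k < d → ((d.choose k : K) = 0))
    {A : Type*} [CommRing A] [Algebra K A] (a b : A) :
    (a + b) ^ d = a ^ d + b ^ d := by
  rw [add_pow]
  have hterm : ∀ k ∈ Finset.range (d + 1),
      a ^ k * b ^ (d - k) * (d.choose k : A)
        = (if k = 0 then b ^ d else 0) + (if k = d then a ^ d else 0) := by
    intro k hk
    rcases Nat.eq_zero_or_pos k with rfl | hkpos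
    · rw [if_pos rfl, if_neg (by omega), add_zero, pow_zero, one_mul,
        Nat.choose_zero_right, Nat.cast_one, mul_one, Nat.sub_zero]
    rcases eq_or_lt_of_le (Nat.lt_succ_iff.mp (Finset.mem_range.mp hk)) with rfl | hkd
    · rw [if_neg (by omega), if_pos rfl, zero_add, Nat.choose_self, Nat.cast_one, mul_one,
        Nat.sub_self, pow_zero, mul_one]
    · have hcast : (d.choose k : A) = 0 := by
        rw [← map_natCast (algebraMap K A) (d.choose k), hbin k hkpos hkd, map_zero]
      rw [hcast, mul_zero, if_neg (by omega), if_neg (by omega), add_zero]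
  rw [Finset.sum_congr rfl hterm, Finset.sum_add_distrib]
  rw [Finset.sum_ite_eq' (Finset.range (d + 1)) 0 (fun _ => b ^ d),
    Finset.sum_ite_eq' (Finset.range (d + 1)) d (fun _ => a ^ d)]
  rw [if_pos (Finset.mem_range.mpr (by omega)), if_pos (Finset.mem_range.mpr (by omega))]
  ring

lemma sum_pow_eq_of_bin {d : ℕ} (hd : 1 ≤ d)
    (hbin : ∀ k, 0 < k → k < d → ((d.choose k : K) = 0))
    {A : Type*} [CommRing A] [Algebra K A] {B : Type*} (s : Finset B) (g : B → A) :
    (∑ i ∈ s, g i) ^ d = ∑ i ∈ s, (g i) ^ d := by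
  induction s using Finset.cons_induction with
  | empty => simp [zero_pow (by omega : d ≠ 0)]
  | cons a s ha ih =>
    rw [Finset.sum_cons, Finset.sum_cons, add_pow_eq_of_bin hd hbin, ih]

lemma coeff_pow_smul {σ : Type*} {d : ℕ} (hd : 1 ≤ d)
    (hbin : ∀ k, 0 < k → k < d → ((d.choose k : K) = 0))
    (h : MvPolynomial σ K) (m₀ : σ →₀ ℕ) :
    coeff (d • m₀) (h ^ d) = (coeff m₀ h) ^ d := by
  classical
  have hs : h ^ d = ∑ m ∈ h.support, monomial (d • m) ((coeff m h) ^ d) := by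
    conv_lhs => rw [as_sum h]
    rw [sum_pow_eq_of_bin hd hbin]
    exact Finset.sum_congr rfl fun m _ => monomial_pow
  rw [hs, coeff_sum]
  have hinj : ∀ m, d • m = d • m₀ → m = m₀ := by
    intro m hdm
    ext i
    have := congrArg (fun g => g i) hdm
    simp only [Finsupp.smul_apply, smul_eq_mul] at this
    exact Nat.eq_of_mul_eq_mul_left (by omega) this
  have hterm : ∀ m ∈ h.support, coeff (d • m₀) (monomial (d • m) ((coeff m h) ^ d))
      = if m = m₀ then (coeff m h) ^ d else 0 := by
    intro m _
    rw [coeff_monomial]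
    by_cases hmm : m = m₀
    · rw [if_pos (by rw [hmm]), if_pos hmm]
    · rw [if_neg (fun hc => hmm (hinj m hc)), if_neg hmm]
  rw [Finset.sum_congr rfl hterm, Finset.sum_ite_eq' h.support m₀ (fun m => (coeff m h) ^ d)]
  by_cases hmem : m₀ ∈ h.support
  · rw [if_pos hmem]
  · rw [if_neg hmem, MvPolynomial.notMem_support_iff.mp hmem, zero_pow (by omega : d ≠ 0)]

/-- Step 5: descent along the `d`-th power map. -/
lemma step5 {σ : Type*} (α : ι → MvPolynomial σ K) (P : Ideal (MvPolynomial ι K))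
    (hP : P = RingHom.ker (aeval α : MvPolynomial ι K →ₐ[K] _))
    {d : ℕ} (hd : 1 ≤ d)
    (hbin : ∀ k, 0 < k → k < d → ((d.choose k : K) = 0))
    (c : ι → K)
    (hmem : (∑ j, monomial (Finsupp.single j d) (c j) : MvPolynomial ι K) ∈ P) :
    (∑ j, monomial (Finsupp.single j d) (c j) : MvPolynomial ι K)
      ∈ Ideal.span {q : MvPolynomial ι K | q ∈ P ∧ q.IsHomogeneous 1} := by
  classical
  -- the `d`-th power ring endomorphism of `K`
  set σpow : K →+* K :=
    { toFun := fun x => x ^ d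
      map_one' := one_pow d
      map_mul' := fun x y => mul_pow x y d
      map_zero' := zero_pow (by omega : d ≠ 0)
      map_add' := fun x y => add_pow_eq_of_bin hd hbin x y } with hσpow
  set L : Subfield K := σpow.fieldRange with hL
  set W : Submodule L K := Submodule.span L (Set.range c) with hW
  haveI : FiniteDimensional L W := FiniteDimensional.span_of_finite L (Set.finite_range c)
  set B := Module.finBasis L W with hB
  set N := Module.finrank L W with hN
  have hcW : ∀ j, c j ∈ W := fun j => Submodule.subset_span (Set.mem_range_self j)
  -- coordinates, with d-th roots
  have hroot : ∀ j t, ∃ x : K, x ^ d = ((B.repr ⟨c j, hcW j⟩ t : L) : K) := by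
    intro j t
    obtain ⟨x, hx⟩ := (B.repr ⟨c j, hcW j⟩ t).2
    exact ⟨x, hx⟩
  set ν : ι → Fin N → K := fun j t => Classical.choose (hroot j t) with hν
  have hνspec : ∀ j t, (ν j t) ^ d = ((B.repr ⟨c j, hcW j⟩ t : L) : K) :=
    fun j t => Classical.choose_spec (hroot j t)
  set ε : Fin N → K := fun t => ((B t : W) : K) with hε
  have hLsmul : ∀ (l : L) (x : K), l • x = (l : K) * x := fun l x => rfl
  have hrepr : ∀ j, c j = ∑ t, (ν j t) ^ d * ε t := by
    intro j
    have h1 := B.sum_repr ⟨c j, hcW j⟩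
    have h2 := congrArg (fun w : W => (w : K)) h1
    simp only [Submodule.coe_sum] at h2
    rw [← h2]
    refine Finset.sum_congr rfl fun t _ => ?_
    rw [hνspec j t]
    rfl
  -- the linear forms
  set ℓ : Fin N → MvPolynomial ι K := fun t => ∑ j, MvPolynomial.C (ν j t) * X j with hℓ
  have hℓhom : ∀ t, (ℓ t).IsHomogeneous 1 := by
    intro t
    exact IsHomogeneous.sum _ _ _ fun j _ => (isHomogeneous_X K j).C_mul _
  -- aeval of the sum
  have haeval_p : aeval α (∑ j, monomial (Finsupp.single j d) (c j) : MvPolynomial ι K)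
      = ∑ j, c j • (α j) ^ d := by
    rw [map_sum]
    refine Finset.sum_congr rfl fun j _ => ?_
    rw [aeval_monomial,
      Finsupp.prod_single_index (h := fun i k => α i ^ k) (pow_zero (α j))]
    exact (Algebra.smul_def _ _).symm
  have haℓ : ∀ t, aeval α (ℓ t) = ∑ j, ν j t • α j := by
    intro t
    simp only [hℓ]
    rw [map_sum]
    refine Finset.sum_congr rfl fun j _ => ?_
    rw [map_mul, aeval_C, aeval_X]
    exact (Algebra.smul_def _ _).symm
  have h0 : aeval α (∑ j, monomial (Finsupp.single j d) (c j) : MvPolynomial ι K) = 0 := by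
    rw [hP] at hmem; exact RingHom.mem_ker.mp hmem
  rw [haeval_p] at h0
  have hkey : ∑ t, ε t • (aeval α (ℓ t)) ^ d = 0 := by
    have e1 : ∀ t, (aeval α (ℓ t)) ^ d = ∑ j, (ν j t) ^ d • (α j) ^ d := by
      intro t
      rw [haℓ t, sum_pow_eq_of_bin hd hbin]
      exact Finset.sum_congr rfl fun j _ => smul_pow _ _ _
    calc ∑ t, ε t • (aeval α (ℓ t)) ^ d
        = ∑ t, ∑ j, (ε t * (ν j t) ^ d) • (α j) ^ d := by
          refine Finset.sum_congr rfl fun t _ => ?_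
          rw [e1 t, Finset.smul_sum]
          exact Finset.sum_congr rfl fun j _ => smul_smul _ _ _
      _ = ∑ j, (∑ t, (ν j t) ^ d * ε t) • (α j) ^ d := by
          rw [Finset.sum_comm]
          refine Finset.sum_congr rfl fun j _ => ?_
          rw [Finset.sum_smul]
          exact Finset.sum_congr rfl fun t _ => by rw [mul_comm]
      _ = ∑ j, c j • (α j) ^ d := by
          refine Finset.sum_congr rfl fun j _ => ?_
          rw [← hrepr j]
      _ = 0 := h0
  have hzero : ∀ t, aeval α (ℓ t) = 0 := by
    intro t
    apply MvPolynomial.ext; intro m₀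
    rw [coeff_zero]
    have h1 := congrArg (coeff (d • m₀)) hkey
    rw [coeff_zero, coeff_sum] at h1
    have h2 : ∀ t' : Fin N, coeff (d • m₀) (ε t' • (aeval α (ℓ t')) ^ d)
        = ε t' * (coeff m₀ (aeval α (ℓ t'))) ^ d := by
      intro t'
      rw [MvPolynomial.coeff_smul, coeff_pow_smul hd hbin]
      rfl
    rw [Finset.sum_congr rfl (fun t' _ => h2 t')] at h1
    have hmeml : ∀ t' : Fin N, ((coeff m₀ (aeval α (ℓ t'))) ^ d) ∈ L :=
      fun t' => RingHom.mem_fieldRange.mpr ⟨coeff m₀ (aeval α (ℓ t')), rfl⟩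
    set l : Fin N → L := fun t' => ⟨(coeff m₀ (aeval α (ℓ t'))) ^ d, hmeml t'⟩ with hl
    have h3 : ∑ t', l t' • B t' = 0 := by
      have hcoe : ((∑ t', l t' • B t' : W) : K) = 0 := by
        rw [Submodule.coe_sum]
        rw [← h1]
        refine Finset.sum_congr rfl fun t' _ => ?_
        have : ((l t' • B t' : W) : K) = (l t' : K) * ε t' := rfl
        rw [this]
        simp only [hl]
        ring
      exact Subtype.ext hcoe
    have h4 : ∀ t', l t' = 0 := by
      have hli := B.linearIndependent
      rw [Fintype.linearIndependent_iff] at hli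
      exact hli l h3
    have h5 := congrArg (Subtype.val) (h4 t)
    simp only [hl, ZeroMemClass.coe_zero] at h5
    exact pow_eq_zero_iff (by omega : d ≠ 0) |>.mp h5
  have hℓP : ∀ t, ℓ t ∈ P := by
    intro t; rw [hP]; exact RingHom.mem_ker.mpr (hzero t)
  have hfinal : (∑ j, monomial (Finsupp.single j d) (c j) : MvPolynomial ι K)
      = ∑ t, ε t • (ℓ t) ^ d := by
    have e1 : ∀ t, (ℓ t) ^ d = ∑ j, (ν j t) ^ d • (X j : MvPolynomial ι K) ^ d := by
      intro t
      simp only [hℓ]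
      rw [sum_pow_eq_of_bin hd hbin]
      refine Finset.sum_congr rfl fun j _ => ?_
      rw [← smul_eq_C_mul, smul_pow]
    calc (∑ j, monomial (Finsupp.single j d) (c j) : MvPolynomial ι K)
        = ∑ j, (∑ t, (ν j t) ^ d * ε t) • (X j : MvPolynomial ι K) ^ d := by
          refine Finset.sum_congr rfl fun j _ => ?_
          rw [X_pow_eq_monomial, smul_monomial, smul_eq_mul, mul_one, ← hrepr j]
      _ = ∑ t, ε t • (ℓ t) ^ d := by
          rw [Finset.sum_congr rfl (fun j (_ : j ∈ Finset.univ) => Finset.sum_smul)]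
          rw [Finset.sum_comm]
          refine Finset.sum_congr rfl fun t _ => ?_
          rw [e1 t, Finset.smul_sum]
          refine Finset.sum_congr rfl fun j _ => ?_
          rw [smul_smul, mul_comm]
  rw [hfinal]
  refine Submodule.sum_mem _ fun t _ => ?_
  rw [smul_eq_C_mul]
  apply Ideal.mul_mem_left
  refine Ideal.pow_mem_of_mem _ (Ideal.subset_span ?_) d (by omega)
  exact ⟨hℓP t, hℓhom t⟩

end Frobenius

section Psi

variable {K : Type*} [Field K] {ι : Type*} [Fintype ι]

/-- substitution keeping only left variables -/
noncomputable def psi0 : MvPolynomial (ι ⊕ ι) K →ₐ[K] MvPolynomial (ι ⊕ ι) K :=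
  aeval (Sum.elim (fun i => X (Sum.inl i)) (fun _ => 0))

noncomputable def psi1 : MvPolynomial (ι ⊕ ι) K →ₐ[K] MvPolynomial (ι ⊕ ι) K :=
  aeval (Sum.elim (fun _ => 0) (fun i => X (Sum.inr i)))

lemma psi0_monomial (m : (ι ⊕ ι) →₀ ℕ) (c : K) :
    psi0 (monomial m c) = if udeg m = 0 then monomial m c else 0 := by
  rw [psi0, aeval_monomial]
  by_cases h : udeg m = 0
  · rw [if_pos h]
    have hval : ∀ x ∈ m.support,
        (Sum.elim (fun i => (X (Sum.inl i) : MvPolynomial (ι ⊕ ι) K)) (fun _ => 0)) x ^ m x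
          = X x ^ m x := by
      intro x hx
      cases x with
      | inl i => rfl
      | inr i =>
        exact absurd ((udeg_eq_zero_iff m).mp h i) (Finsupp.mem_support_iff.mp hx)
    rw [Finsupp.prod, Finset.prod_congr rfl hval, prod_X_pow_eq_monomial,
      MvPolynomial.algebraMap_eq, C_mul_monomial, mul_one]
  · rw [if_neg h]
    obtain ⟨i, hi⟩ : ∃ i, m (Sum.inr i) ≠ 0 := by
      by_contra hc; push_neg at hc
      exact h ((udeg_eq_zero_iff m).mpr hc)
    have : (Sum.elim (fun i => (X (Sum.inl i) : MvPolynomial (ι ⊕ ι) K)) (fun _ => 0))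
        (Sum.inr i) ^ m (Sum.inr i) = 0 := by
      simp only [Sum.elim_inr]
      exact zero_pow hi
    rw [Finsupp.prod, Finset.prod_eq_zero (Finsupp.mem_support_iff.mpr hi) this, mul_zero]

lemma psi1_monomial (m : (ι ⊕ ι) →₀ ℕ) (c : K) :
    psi1 (monomial m c) = if tdeg m = 0 then monomial m c else 0 := by
  rw [psi1, aeval_monomial]
  by_cases h : tdeg m = 0
  · rw [if_pos h]
    have hval : ∀ x ∈ m.support,
        (Sum.elim (fun _ => 0) (fun i => (X (Sum.inr i) : MvPolynomial (ι ⊕ ι) K))) x ^ m x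
          = X x ^ m x := by
      intro x hx
      cases x with
      | inr i => rfl
      | inl i =>
        exact absurd ((tdeg_eq_zero_iff m).mp h i) (Finsupp.mem_support_iff.mp hx)
    rw [Finsupp.prod, Finset.prod_congr rfl hval, prod_X_pow_eq_monomial,
      MvPolynomial.algebraMap_eq, C_mul_monomial, mul_one]
  · rw [if_neg h]
    obtain ⟨i, hi⟩ : ∃ i, m (Sum.inl i) ≠ 0 := by
      by_contra hc; push_neg at hc
      exact h ((tdeg_eq_zero_iff m).mpr hc)
    have : (Sum.elim (fun _ => 0) (fun i => (X (Sum.inr i) : MvPolynomial (ι ⊕ ι) K)))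
        (Sum.inl i) ^ m (Sum.inl i) = 0 := by
      simp only [Sum.elim_inl]
      exact zero_pow hi
    rw [Finsupp.prod, Finset.prod_eq_zero (Finsupp.mem_support_iff.mpr hi) this, mul_zero]

lemma coeff_psi0 (h : MvPolynomial (ι ⊕ ι) K) (m₀ : (ι ⊕ ι) →₀ ℕ) (h0 : udeg m₀ = 0) :
    coeff m₀ (psi0 h) = coeff m₀ h := by
  classical
  conv_rhs => rw [as_sum h]
  conv_lhs => rw [as_sum h]
  rw [map_sum, coeff_sum, coeff_sum]
  refine Finset.sum_congr rfl fun m _ => ?_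
  rw [psi0_monomial]
  by_cases hm : udeg m = 0
  · rw [if_pos hm]
  · rw [if_neg hm, coeff_zero, coeff_monomial, if_neg (fun hc : m = m₀ => hm (by rw [hc, h0]))]

lemma coeff_psi1 (h : MvPolynomial (ι ⊕ ι) K) (m₀ : (ι ⊕ ι) →₀ ℕ) (h0 : tdeg m₀ = 0) :
    coeff m₀ (psi1 h) = coeff m₀ h := by
  classical
  conv_rhs => rw [as_sum h]
  conv_lhs => rw [as_sum h]
  rw [map_sum, coeff_sum, coeff_sum]
  refine Finset.sum_congr rfl fun m _ => ?_
  rw [psi1_monomial]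
  by_cases hm : tdeg m = 0
  · rw [if_pos hm]
  · rw [if_neg hm, coeff_zero, coeff_monomial, if_neg (fun hc : m = m₀ => hm (by rw [hc, h0]))]

lemma psi0_D (p : MvPolynomial ι K) :
    psi0 (aeval (fun i => (X (Sum.inl i) + X (Sum.inr i) : MvPolynomial (ι ⊕ ι) K)) p)
      = rename Sum.inl p := by
  have : (psi0 (K := K) (ι := ι)).comp
      (aeval (fun i => (X (Sum.inl i) + X (Sum.inr i) : MvPolynomial (ι ⊕ ι) K)))
      = (rename Sum.inl : MvPolynomial ι K →ₐ[K] MvPolynomial (ι ⊕ ι) K) := by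
    apply MvPolynomial.algHom_ext
    intro i
    simp [psi0]
  exact congrArg (fun (F : MvPolynomial ι K →ₐ[K] MvPolynomial (ι ⊕ ι) K) => F p) this

lemma psi1_D (p : MvPolynomial ι K) :
    psi1 (aeval (fun i => (X (Sum.inl i) + X (Sum.inr i) : MvPolynomial (ι ⊕ ι) K)) p)
      = rename Sum.inr p := by
  have : (psi1 (K := K) (ι := ι)).comp
      (aeval (fun i => (X (Sum.inl i) + X (Sum.inr i) : MvPolynomial (ι ⊕ ι) K)))
      = (rename Sum.inr : MvPolynomial ι K →ₐ[K] MvPolynomial (ι ⊕ ι) K) := by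
    apply MvPolynomial.algHom_ext
    intro i
    simp [psi1]
  exact congrArg (fun (F : MvPolynomial ι K →ₐ[K] MvPolynomial (ι ⊕ ι) K) => F p) this

lemma psi0_inl (p : MvPolynomial ι K) :
    psi0 (rename (Sum.inl : ι → ι ⊕ ι) p) = rename Sum.inl p := by
  have : (psi0 (K := K) (ι := ι)).comp
      (rename Sum.inl : MvPolynomial ι K →ₐ[K] MvPolynomial (ι ⊕ ι) K)
      = (rename Sum.inl : MvPolynomial ι K →ₐ[K] MvPolynomial (ι ⊕ ι) K) := by
    apply MvPolynomial.algHom_ext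
    intro i
    simp [psi0]
  exact congrArg (fun (F : MvPolynomial ι K →ₐ[K] MvPolynomial (ι ⊕ ι) K) => F p) this

lemma psi1_inr (p : MvPolynomial ι K) :
    psi1 (rename (Sum.inr : ι → ι ⊕ ι) p) = rename Sum.inr p := by
  have : (psi1 (K := K) (ι := ι)).comp
      (rename Sum.inr : MvPolynomial ι K →ₐ[K] MvPolynomial (ι ⊕ ι) K)
      = (rename Sum.inr : MvPolynomial ι K →ₐ[K] MvPolynomial (ι ⊕ ι) K) := by
    apply MvPolynomial.algHom_ext
    intro i
    simp [psi1]
  exact congrArg (fun (F : MvPolynomial ι K →ₐ[K] MvPolynomial (ι ⊕ ι) K) => F p) this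

lemma psi0_inr (p : MvPolynomial ι K) {d : ℕ} (hd : 1 ≤ d) (hp : p.IsHomogeneous d) :
    psi0 (rename (Sum.inr : ι → ι ⊕ ι) p) = 0 := by
  rw [psi0, aeval_rename]
  have hfun : (Sum.elim (fun i => (X (Sum.inl i) : MvPolynomial (ι ⊕ ι) K)) (fun _ => 0))
      ∘ (Sum.inr : ι → ι ⊕ ι) = fun _ => 0 := rfl
  rw [hfun, aeval_zero']
  have : constantCoeff p = 0 := by
    rw [constantCoeff_eq]
    apply hp.coeff_eq_zero
    rw [map_zero]
    omega
  rw [this, map_zero]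

lemma psi1_inl (p : MvPolynomial ι K) {d : ℕ} (hd : 1 ≤ d) (hp : p.IsHomogeneous d) :
    psi1 (rename (Sum.inl : ι → ι ⊕ ι) p) = 0 := by
  rw [psi1, aeval_rename]
  have hfun : (Sum.elim (fun _ => 0) (fun i => (X (Sum.inr i) : MvPolynomial (ι ⊕ ι) K)))
      ∘ (Sum.inl : ι → ι ⊕ ι) = fun _ => 0 := rfl
  rw [hfun, aeval_zero']
  have : constantCoeff p = 0 := by
    rw [constantCoeff_eq]
    apply hp.coeff_eq_zero
    rw [map_zero]
    omega
  rw [this, map_zero]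

/-- coefficients of `D p - inl p - inr p` vanish on monomials with `udeg = 0` -/
lemma g_coeff_udeg0 (p : MvPolynomial ι K) {d : ℕ} (hd : 1 ≤ d) (hp : p.IsHomogeneous d)
    (m₀ : (ι ⊕ ι) →₀ ℕ) (h0 : udeg m₀ = 0) :
    coeff m₀ (aeval (fun i => (X (Sum.inl i) + X (Sum.inr i) : MvPolynomial (ι ⊕ ι) K)) p
      - rename Sum.inl p - rename Sum.inr p) = 0 := by
  rw [coeff_sub, coeff_sub]
  rw [← coeff_psi0 _ _ h0, psi0_D]
  rw [← coeff_psi0 (rename Sum.inl p) _ h0, psi0_inl]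
  rw [← coeff_psi0 (rename Sum.inr p) _ h0, psi0_inr p hd hp]
  simp

lemma g_coeff_tdeg0 (p : MvPolynomial ι K) {d : ℕ} (hd : 1 ≤ d) (hp : p.IsHomogeneous d)
    (m₀ : (ι ⊕ ι) →₀ ℕ) (h0 : tdeg m₀ = 0) :
    coeff m₀ (aeval (fun i => (X (Sum.inl i) + X (Sum.inr i) : MvPolynomial (ι ⊕ ι) K)) p
      - rename Sum.inl p - rename Sum.inr p) = 0 := by
  rw [coeff_sub, coeff_sub]
  rw [← coeff_psi1 _ _ h0, psi1_D]
  rw [← coeff_psi1 (rename Sum.inl p) _ h0, psi1_inl p hd hp]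
  rw [← coeff_psi1 (rename Sum.inr p) _ h0, psi1_inr]
  simp

end Psi

section Lin

variable {K : Type*} [Field K] {ι : Type*} [Fintype ι]

lemma degree_one_single {m : ι →₀ ℕ} (hm : m.degree = 1) : ∃ j, m = Finsupp.single j 1 := by
  classical
  have hne : m.support.Nonempty := by
    by_contra hc
    rw [Finset.not_nonempty_iff_eq_empty] at hc
    rw [Finsupp.degree_apply, hc, Finset.sum_empty] at hm
    omega
  obtain ⟨j, hj⟩ := hne
  have hj1 : 1 ≤ m j := Nat.one_le_iff_ne_zero.mpr (Finsupp.mem_support_iff.mp hj)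
  have hsplit : m j + ∑ i ∈ m.support.erase j, m i = m.degree := by
    rw [Finsupp.degree_apply]
    exact Finset.add_sum_erase _ _ hj
  have hrest : ∀ i ∈ m.support.erase j, m i = 0 := by
    intro i hi
    have h1 : ∑ i ∈ m.support.erase j, m i = 0 := by omega
    exact Finset.sum_eq_zero_iff.mp h1 i hi
  refine ⟨j, ?_⟩
  ext i
  by_cases hij : i = j
  · subst hij
    rw [Finsupp.single_eq_same]
    omega
  · rw [Finsupp.single_eq_of_ne' (fun hc => hij hc.symm)]
    by_cases hmem : i ∈ m.support
    · exact hrest i (Finset.mem_erase.mpr ⟨hij, hmem⟩)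
    · exact Finsupp.notMem_support_iff.mp hmem

lemma lin_decomp (ℓ : MvPolynomial ι K) (hl : ℓ.IsHomogeneous 1) :
    ℓ = ∑ i, (coeff (Finsupp.single i 1) ℓ) • X i := by
  classical
  apply MvPolynomial.ext
  intro m₀
  rw [coeff_sum]
  have hterm : ∀ i : ι, coeff m₀ ((coeff (Finsupp.single i 1) ℓ) • X i)
      = if Finsupp.single i 1 = m₀ then coeff (Finsupp.single i 1) ℓ else 0 := by
    intro i
    rw [MvPolynomial.coeff_smul, coeff_X', smul_ite, smul_eq_mul, mul_one, smul_zero]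
  rw [Finset.sum_congr rfl (fun i _ => hterm i)]
  by_cases hex : ∃ j, m₀ = Finsupp.single j 1
  · obtain ⟨j, rfl⟩ := hex
    rw [Finset.sum_eq_single j (fun i _ hij => if_neg (fun hc => hij (by
        have := congrArg (fun g => g i) hc
        simp only [Finsupp.single_eq_same] at this
        by_contra hij'
        rw [Finsupp.single_apply, if_neg (fun h => hij' h.symm)] at this
        omega)))
      (fun hj => absurd (Finset.mem_univ j) hj)]
    rw [if_pos rfl]
  · rw [Finset.sum_eq_zero (fun i _ => if_neg (fun hc => hex ⟨i, hc.symm⟩))]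
    by_contra hc
    have hmem : m₀ ∈ ℓ.support := MvPolynomial.mem_support_iff.mpr hc
    have hdeg : m₀.degree = 1 := by
      by_contra hne
      exact (MvPolynomial.mem_support_iff.mp hmem) (hl.coeff_eq_zero hne)
    exact hex (degree_one_single hdeg)

lemma D_linear (ℓ : MvPolynomial ι K) (hl : ℓ.IsHomogeneous 1) :
    aeval (fun i => (X (Sum.inl i) + X (Sum.inr i) : MvPolynomial (ι ⊕ ι) K)) ℓ
      = rename Sum.inl ℓ + rename Sum.inr ℓ := by
  conv_lhs => rw [lin_decomp ℓ hl]
  conv_rhs => rw [lin_decomp ℓ hl]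
  rw [map_sum, map_sum, map_sum, ← Finset.sum_add_distrib]
  refine Finset.sum_congr rfl fun i _ => ?_
  rw [map_smul, map_smul, map_smul, aeval_X, rename_X, rename_X, ← smul_add]

/-- Construction of the projection along the linear part of `P`. -/
lemma exists_proj (P : Ideal (MvPolynomial ι K)) :
    ∃ qv : ι → MvPolynomial ι K,
      (∀ i, (qv i).IsHomogeneous 1) ∧
      (∀ i, X i - qv i ∈ P ∧ (X i - qv i).IsHomogeneous 1) ∧
      (∀ ℓ ∈ P, ℓ.IsHomogeneous 1 → aeval qv ℓ = 0) := by
  classical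
  set Lin := homogeneousSubmodule ι K 1 with hLin
  set V : Submodule K ↥Lin :=
    Submodule.comap Lin.subtype (Submodule.restrictScalars K (P : Submodule _ _)) with hV
  obtain ⟨W, hW⟩ := Submodule.exists_isCompl V
  set pr := Submodule.linearProjOfIsCompl W V hW.symm with hpr
  have hXLin : ∀ i : ι, (X i : MvPolynomial ι K) ∈ Lin :=
    fun i => (mem_homogeneousSubmodule 1 _).mpr (isHomogeneous_X K i)
  set xI : ι → ↥Lin := fun i => ⟨X i, hXLin i⟩ with hxI
  set qv : ι → MvPolynomial ι K := fun i => (((pr (xI i) : ↥W) : ↥Lin) : MvPolynomial ι K)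
    with hqv
  have hsub : ∀ x : ↥Lin, x - (((pr x : ↥W) : ↥Lin)) ∈ V := by
    intro x
    have h1 : pr (((pr x : ↥W) : ↥Lin)) = pr x :=
      Submodule.linearProjOfIsCompl_apply_left hW.symm (pr x)
    have h2 : pr (x - (((pr x : ↥W) : ↥Lin))) = 0 := by
      rw [map_sub, h1, sub_self]
    exact (Submodule.linearProjOfIsCompl_apply_eq_zero_iff hW.symm).mp h2
  refine ⟨qv, ?_, ?_, ?_⟩
  · intro i
    exact (mem_homogeneousSubmodule 1 _).mp ((pr (xI i) : ↥Lin).2)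
  · intro i
    have hmem := hsub (xI i)
    have hcoe : ((xI i - ((pr (xI i) : ↥W) : ↥Lin) : ↥Lin) : MvPolynomial ι K)
        = X i - qv i := rfl
    constructor
    · have := hmem
      rw [hV, Submodule.mem_comap] at this
      rw [← hcoe]
      exact this
    · rw [← hcoe]
      exact (mem_homogeneousSubmodule 1 _).mp (xI i - ((pr (xI i) : ↥W) : ↥Lin)).2
  · intro ℓ hl hhom1
    have hlLin : ℓ ∈ Lin := (mem_homogeneousSubmodule 1 _).mpr hhom1
    have hdecomp := lin_decomp ℓ hhom1
    have hsum : (⟨ℓ, hlLin⟩ : ↥Lin) = ∑ i, coeff (Finsupp.single i 1) ℓ • xI i := by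
      apply Subtype.ext
      rw [Submodule.coe_sum]
      show ℓ = _
      conv_lhs => rw [hdecomp]
      refine Finset.sum_congr rfl fun i _ => ?_
      rfl
    have hpr0 : pr ⟨ℓ, hlLin⟩ = 0 := by
      apply Submodule.linearProjOfIsCompl_apply_right' hW.symm
      rw [hV, Submodule.mem_comap]
      exact hl
    have haeval : aeval qv ℓ = (((pr ⟨ℓ, hlLin⟩ : ↥W) : ↥Lin) : MvPolynomial ι K) := by
      conv_lhs => rw [hdecomp]
      rw [map_sum, hsum, map_sum]
      rw [Submodule.coe_sum, Submodule.coe_sum]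
      refine Finset.sum_congr rfl fun i _ => ?_
      rw [map_smul, aeval_X, map_smul]
      rfl
    rw [haeval, hpr0]
    rfl

end Lin

end LinLem

open MvPolynomial in
/-- **Linear Lemma.** Let `α_i ∈ K[y_1,…,y_r]` and `β_i ∈ K[z_1,…,z_s]`. Suppose the kernel
`P` of `T_i ↦ α_i` equals the kernel of `T_i ↦ β_i` and is contained in the kernel of
`T_i ↦ α_i + β_i` (inside `K[y's, z's]`). If `P` is homogeneous, it is generated by linear
forms. -/
theorem kernel_generated_by_linear_forms
    (K : Type*) [Field K] (n r s : ℕ)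
    (α : Fin n → MvPolynomial (Fin r) K) (β : Fin n → MvPolynomial (Fin s) K)
    (P : Ideal (MvPolynomial (Fin n) K))
    (hP : P = RingHom.ker (MvPolynomial.aeval α : MvPolynomial (Fin n) K →ₐ[K] _))
    (hβ : P = RingHom.ker (MvPolynomial.aeval β : MvPolynomial (Fin n) K →ₐ[K] _))
    (hsum : P ≤ RingHom.ker (MvPolynomial.aeval
      (fun i => MvPolynomial.rename Sum.inl (α i) + MvPolynomial.rename Sum.inr (β i) :
        Fin n → MvPolynomial (Fin r ⊕ Fin s) K) : MvPolynomial (Fin n) K →ₐ[K] _))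
    (hhom : ∀ p ∈ P, ∀ k : ℕ, MvPolynomial.homogeneousComponent k p ∈ P) :
    P = Ideal.span {p : MvPolynomial (Fin n) K | p ∈ P ∧ p.IsHomogeneous 1} := by
  classical
  set J : Ideal (MvPolynomial (Fin n) K) :=
    Ideal.span {p : MvPolynomial (Fin n) K | p ∈ P ∧ p.IsHomogeneous 1} with hJ
  have hJP : J ≤ P := Ideal.span_le.mpr (fun x hx => hx.1)
  -- degree 0 elements of P vanish
  have hP0 : ∀ p ∈ P, p.IsHomogeneous 0 → p = 0 := by
    intro p hp h0
    have hpc : p = C (coeff 0 p) := by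
      apply MvPolynomial.ext
      intro m
      rw [coeff_C]
      by_cases hm : (0 : Fin n →₀ ℕ) = m
      · rw [if_pos hm, ← hm]
      · rw [if_neg hm]
        apply h0.coeff_eq_zero
        intro hdeg
        exact hm (((Finsupp.degree_eq_zero_iff m).mp hdeg).symm)
    have : MvPolynomial.aeval α p = 0 := by
      rw [hP] at hp; exact RingHom.mem_ker.mp hp
    rw [hpc] at this
    rw [aeval_C] at this
    have hc0 : coeff 0 p = 0 := by
      rwa [MvPolynomial.algebraMap_eq, ← MvPolynomial.C_0, MvPolynomial.C_inj] at this
    rw [hpc, hc0, map_zero]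
  -- the composite fact
  have hcompose : ∀ p : MvPolynomial (Fin n) K,
      MvPolynomial.aeval
        (Sum.elim (fun i => rename Sum.inl (α i)) (fun i => rename Sum.inr (β i)))
        (MvPolynomial.aeval
          (fun i => (X (Sum.inl i) + X (Sum.inr i) : MvPolynomial (Fin n ⊕ Fin n) K)) p)
      = MvPolynomial.aeval
          (fun i => rename Sum.inl (α i) + rename Sum.inr (β i)) p := by
    intro p
    have hcompeq : (MvPolynomial.aeval
        (Sum.elim (fun i => rename Sum.inl (α i)) (fun i => rename Sum.inr (β i))) :
          MvPolynomial (Fin n ⊕ Fin n) K →ₐ[K] MvPolynomial (Fin r ⊕ Fin s) K).comp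
        (MvPolynomial.aeval
          (fun i => (X (Sum.inl i) + X (Sum.inr i) : MvPolynomial (Fin n ⊕ Fin n) K)))
        = MvPolynomial.aeval (fun i => rename Sum.inl (α i) + rename Sum.inr (β i)) := by
      apply MvPolynomial.algHom_ext
      intro i
      simp
    exact congrArg
      (fun (F : MvPolynomial (Fin n) K →ₐ[K] MvPolynomial (Fin r ⊕ Fin s) K) => F p) hcompeq
  have hDQ : ∀ p ∈ P,
      (MvPolynomial.aeval
        (fun i => (X (Sum.inl i) + X (Sum.inr i) : MvPolynomial (Fin n ⊕ Fin n) K)) p)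
        ∈ Ideal.span ((rename (Sum.inl : Fin n → Fin n ⊕ Fin n) '' (P : Set _)) ∪
            (rename (Sum.inr : Fin n → Fin n ⊕ Fin n) '' (P : Set _))) := by
    intro p hp
    apply LinLem.ker_aeval_sum_le α β P hP hβ
    rw [RingHom.mem_ker]
    show MvPolynomial.aeval _ _ = 0
    rw [hcompose p]
    exact RingHom.mem_ker.mp (hsum hp)
  -- the projection
  obtain ⟨qv, hq1, hq2, hq3⟩ := LinLem.exists_proj P
  have hPiJ : ∀ x ∈ J, MvPolynomial.aeval qv x = 0 := by
    intro x hx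
    have hle : J ≤ RingHom.ker (MvPolynomial.aeval qv :
        MvPolynomial (Fin n) K →ₐ[K] MvPolynomial (Fin n) K) := by
      rw [hJ, Ideal.span_le]
      rintro y ⟨hyP, hy1⟩
      rw [SetLike.mem_coe, RingHom.mem_ker]
      exact hq3 y hyP hy1
    exact RingHom.mem_ker.mp (hle hx)
  have hdiff : ∀ x : MvPolynomial (Fin n) K, x - MvPolynomial.aeval qv x ∈ J := by
    intro x
    have hquot : (Ideal.Quotient.mk J).comp
        ((MvPolynomial.aeval qv : MvPolynomial (Fin n) K →ₐ[K] MvPolynomial (Fin n) K) :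
          MvPolynomial (Fin n) K →+* MvPolynomial (Fin n) K)
        = Ideal.Quotient.mk J := by
      apply MvPolynomial.ringHom_ext
      · intro a
        simp [aeval_C]
      · intro i
        show Ideal.Quotient.mk J (MvPolynomial.aeval qv (X i)) = Ideal.Quotient.mk J (X i)
        rw [aeval_X, Ideal.Quotient.eq]
        apply neg_mem_iff.mp
        rw [neg_sub]
        exact Ideal.subset_span ⟨(hq2 i).1, (hq2 i).2⟩
    have hmk := congrArg (fun (F : MvPolynomial (Fin n) K →+* MvPolynomial (Fin n) K ⧸ J) => F x)
      hquot
    simp only [RingHom.comp_apply] at hmk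
    have h2 := Ideal.Quotient.eq.mp hmk
    have h3 := J.neg_mem h2
    rwa [neg_sub] at h3
  -- Π₂ commutation
  have hPi2inl : ∀ p : MvPolynomial (Fin n) K,
      MvPolynomial.aeval (Sum.elim (fun i => rename (Sum.inl : Fin n → Fin n ⊕ Fin n) (qv i))
          (fun i => rename (Sum.inr : Fin n → Fin n ⊕ Fin n) (qv i)))
        (rename Sum.inl p)
      = rename Sum.inl (MvPolynomial.aeval qv p) := by
    intro p
    have heq : (MvPolynomial.aeval
        (Sum.elim (fun i => rename (Sum.inl : Fin n → Fin n ⊕ Fin n) (qv i))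
          (fun i => rename (Sum.inr : Fin n → Fin n ⊕ Fin n) (qv i))) :
            MvPolynomial (Fin n ⊕ Fin n) K →ₐ[K] MvPolynomial (Fin n ⊕ Fin n) K).comp
        (rename (Sum.inl : Fin n → Fin n ⊕ Fin n) :
          MvPolynomial (Fin n) K →ₐ[K] MvPolynomial (Fin n ⊕ Fin n) K)
        = ((rename (Sum.inl : Fin n → Fin n ⊕ Fin n) :
            MvPolynomial (Fin n) K →ₐ[K] MvPolynomial (Fin n ⊕ Fin n) K)).comp
          (MvPolynomial.aeval qv) := by
      apply MvPolynomial.algHom_ext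
      intro i
      simp
    exact congrArg
      (fun (F : MvPolynomial (Fin n) K →ₐ[K] MvPolynomial (Fin n ⊕ Fin n) K) => F p) heq
  have hPi2inr : ∀ p : MvPolynomial (Fin n) K,
      MvPolynomial.aeval (Sum.elim (fun i => rename (Sum.inl : Fin n → Fin n ⊕ Fin n) (qv i))
          (fun i => rename (Sum.inr : Fin n → Fin n ⊕ Fin n) (qv i)))
        (rename Sum.inr p)
      = rename Sum.inr (MvPolynomial.aeval qv p) := by
    intro p
    have heq : (MvPolynomial.aeval
        (Sum.elim (fun i => rename (Sum.inl : Fin n → Fin n ⊕ Fin n) (qv i))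
          (fun i => rename (Sum.inr : Fin n → Fin n ⊕ Fin n) (qv i))) :
            MvPolynomial (Fin n ⊕ Fin n) K →ₐ[K] MvPolynomial (Fin n ⊕ Fin n) K).comp
        (rename (Sum.inr : Fin n → Fin n ⊕ Fin n) :
          MvPolynomial (Fin n) K →ₐ[K] MvPolynomial (Fin n ⊕ Fin n) K)
        = ((rename (Sum.inr : Fin n → Fin n ⊕ Fin n) :
            MvPolynomial (Fin n) K →ₐ[K] MvPolynomial (Fin n ⊕ Fin n) K)).comp
          (MvPolynomial.aeval qv) := by
      apply MvPolynomial.algHom_ext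
      intro i
      simp
    exact congrArg
      (fun (F : MvPolynomial (Fin n) K →ₐ[K] MvPolynomial (Fin n ⊕ Fin n) K) => F p) heq
  have hPi2D : ∀ p : MvPolynomial (Fin n) K,
      MvPolynomial.aeval (Sum.elim (fun i => rename (Sum.inl : Fin n → Fin n ⊕ Fin n) (qv i))
          (fun i => rename (Sum.inr : Fin n → Fin n ⊕ Fin n) (qv i)))
        (MvPolynomial.aeval
          (fun i => (X (Sum.inl i) + X (Sum.inr i) : MvPolynomial (Fin n ⊕ Fin n) K)) p)
      = MvPolynomial.aeval
          (fun i => (X (Sum.inl i) + X (Sum.inr i) : MvPolynomial (Fin n ⊕ Fin n) K))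
          (MvPolynomial.aeval qv p) := by
    intro p
    have heq : (MvPolynomial.aeval
        (Sum.elim (fun i => rename (Sum.inl : Fin n → Fin n ⊕ Fin n) (qv i))
          (fun i => rename (Sum.inr : Fin n → Fin n ⊕ Fin n) (qv i))) :
            MvPolynomial (Fin n ⊕ Fin n) K →ₐ[K] MvPolynomial (Fin n ⊕ Fin n) K).comp
        (MvPolynomial.aeval
          (fun i => (X (Sum.inl i) + X (Sum.inr i) : MvPolynomial (Fin n ⊕ Fin n) K)))
        = (MvPolynomial.aeval
            (fun i => (X (Sum.inl i) + X (Sum.inr i) : MvPolynomial (Fin n ⊕ Fin n) K)) :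
              MvPolynomial (Fin n) K →ₐ[K] MvPolynomial (Fin n ⊕ Fin n) K).comp
          (MvPolynomial.aeval qv) := by
      apply MvPolynomial.algHom_ext
      intro i
      simp only [AlgHom.comp_apply, aeval_X, map_add]
      rw [LinLem.D_linear (qv i) (hq1 i)]
      simp
    exact congrArg
      (fun (F : MvPolynomial (Fin n) K →ₐ[K] MvPolynomial (Fin n ⊕ Fin n) K) => F p) heq
  -- main induction
  have hkey : ∀ d : ℕ, ∀ p ∈ P, p.IsHomogeneous d → p ∈ J := by
    intro d
    induction d using Nat.strong_induction_on with
    | _ d IH =>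
      intro p hp hphom
      rcases Nat.eq_zero_or_pos d with rfl | hd1
      · rw [hP0 p hp hphom]; exact J.zero_mem
      -- set up g
      have hDphom : (MvPolynomial.aeval
          (fun i => (X (Sum.inl i) + X (Sum.inr i) : MvPolynomial (Fin n ⊕ Fin n) K))
            p).IsHomogeneous d := by
        have := hphom.aeval
          (fun i => (X (Sum.inl i) + X (Sum.inr i) : MvPolynomial (Fin n ⊕ Fin n) K))
          (fun i => (isHomogeneous_X _ _).add (isHomogeneous_X _ _))
        rwa [one_mul] at this
      have hghom : (MvPolynomial.aeval
          (fun i => (X (Sum.inl i) + X (Sum.inr i) : MvPolynomial (Fin n ⊕ Fin n) K)) p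
            - rename Sum.inl p - rename Sum.inr p).IsHomogeneous d :=
        (hDphom.sub hphom.rename_isHomogeneous).sub hphom.rename_isHomogeneous
      have hgQ : (MvPolynomial.aeval
          (fun i => (X (Sum.inl i) + X (Sum.inr i) : MvPolynomial (Fin n ⊕ Fin n) K)) p
            - rename Sum.inl p - rename Sum.inr p)
          ∈ Ideal.span ((rename (Sum.inl : Fin n → Fin n ⊕ Fin n) '' (P : Set _)) ∪
              (rename (Sum.inr : Fin n → Fin n ⊕ Fin n) '' (P : Set _))) := by
        refine Submodule.sub_mem _ (Submodule.sub_mem _ (hDQ p hp) ?_) ?_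
        · exact Ideal.subset_span (Or.inl ⟨p, hp, rfl⟩)
        · exact Ideal.subset_span (Or.inr ⟨p, hp, rfl⟩)
      have hsupp : ∀ m ∈ (MvPolynomial.aeval
          (fun i => (X (Sum.inl i) + X (Sum.inr i) : MvPolynomial (Fin n ⊕ Fin n) K)) p
            - rename Sum.inl p - rename Sum.inr p).support, LinLem.predM d m := by
        intro m hm
        have hc := MvPolynomial.mem_support_iff.mp hm
        refine ⟨?_, ?_, ?_⟩
        · intro h0; exact hc (LinLem.g_coeff_tdeg0 p hd1 hphom m h0)
        · intro h0; exact hc (LinLem.g_coeff_udeg0 p hd1 hphom m h0)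
        · by_contra hne; exact hc (hghom.coeff_eq_zero hne)
      have hgJJ := LinLem.mem_JJ P hhom hP0 d _ hgQ hsupp
      have hsets : ((rename (Sum.inl : Fin n → Fin n ⊕ Fin n) ''
            {q : MvPolynomial (Fin n) K | q ∈ P ∧ ∃ k, 0 < k ∧ k < d ∧ q.IsHomogeneous k}) ∪
          (rename (Sum.inr : Fin n → Fin n ⊕ Fin n) ''
            {q : MvPolynomial (Fin n) K | q ∈ P ∧ ∃ k, 0 < k ∧ k < d ∧ q.IsHomogeneous k}))
          ⊆ ((rename (Sum.inl : Fin n → Fin n ⊕ Fin n) '' (J : Set _)) ∪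
              (rename (Sum.inr : Fin n → Fin n ⊕ Fin n) '' (J : Set _))) := by
        rintro x (⟨q, ⟨hqP, k, hk0, hkd, hkhom⟩, rfl⟩ | ⟨q, ⟨hqP, k, hk0, hkd, hkhom⟩, rfl⟩)
        · exact Or.inl ⟨q, IH k hkd q hqP hkhom, rfl⟩
        · exact Or.inr ⟨q, IH k hkd q hqP hkhom, rfl⟩
      have hgJJ' := Ideal.span_mono hsets hgJJ
      have hPi2g : MvPolynomial.aeval
          (Sum.elim (fun i => rename (Sum.inl : Fin n → Fin n ⊕ Fin n) (qv i))
            (fun i => rename (Sum.inr : Fin n → Fin n ⊕ Fin n) (qv i)))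
          (MvPolynomial.aeval
            (fun i => (X (Sum.inl i) + X (Sum.inr i) : MvPolynomial (Fin n ⊕ Fin n) K)) p
              - rename Sum.inl p - rename Sum.inr p) = 0 := by
        have hle : Ideal.span ((rename (Sum.inl : Fin n → Fin n ⊕ Fin n) '' (J : Set _)) ∪
              (rename (Sum.inr : Fin n → Fin n ⊕ Fin n) '' (J : Set _)))
            ≤ RingHom.ker (MvPolynomial.aeval
              (Sum.elim (fun i => rename (Sum.inl : Fin n → Fin n ⊕ Fin n) (qv i))
                (fun i => rename (Sum.inr : Fin n → Fin n ⊕ Fin n) (qv i))) :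
                  MvPolynomial (Fin n ⊕ Fin n) K →ₐ[K] MvPolynomial (Fin n ⊕ Fin n) K) := by
          rw [Ideal.span_le]
          rintro x (⟨q, hq, rfl⟩ | ⟨q, hq, rfl⟩) <;> rw [SetLike.mem_coe, RingHom.mem_ker]
          · rw [hPi2inl q, hPiJ q hq, map_zero]
          · rw [hPi2inr q, hPiJ q hq, map_zero]
        exact RingHom.mem_ker.mp (hle hgJJ')
      rw [map_sub, map_sub, hPi2D, hPi2inl, hPi2inr] at hPi2g
      have hadd' : MvPolynomial.aeval
          (fun i => (X (Sum.inl i) + X (Sum.inr i) : MvPolynomial (Fin n ⊕ Fin n) K))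
            (MvPolynomial.aeval qv p)
          = rename Sum.inl (MvPolynomial.aeval qv p)
            + rename Sum.inr (MvPolynomial.aeval qv p) := by
        rw [sub_sub] at hPi2g
        exact sub_eq_zero.mp hPi2g
      by_cases hzero : MvPolynomial.aeval qv p = 0
      · have h1 := hdiff p
        rwa [hzero, sub_zero] at h1
      have hphP : MvPolynomial.aeval qv p ∈ P := by
        have h1 := hdiff p
        have h2 := hJP h1
        have h3 := P.sub_mem hp h2
        rwa [sub_sub_cancel] at h3
      have hphhom : (MvPolynomial.aeval qv p).IsHomogeneous d := by
        have := hphom.aeval qv hq1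
        rwa [one_mul] at this
      have hsuppne : (MvPolynomial.aeval qv p).support.Nonempty := by
        rw [Finset.nonempty_iff_ne_empty]
        intro hc
        exact hzero (MvPolynomial.support_eq_empty.mp hc)
      obtain ⟨m₁, hm₁⟩ := hsuppne
      have hclass := LinLem.additive_classify (MvPolynomial.aeval qv p) hd1 hphhom hadd'
      have hbin := (hclass m₁ hm₁).2
      have hsingle_inj : ∀ j j' : Fin n,
          (Finsupp.single j d : Fin n →₀ ℕ) = Finsupp.single j' d → j = j' := by
        intro j j' hjj
        by_contra hne
        have h1 := congrArg (fun g => g j) hjj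
        simp only [Finsupp.single_eq_same] at h1
        rw [Finsupp.single_apply, if_neg (fun hc => hne hc.symm)] at h1
        omega
      have hph_eq : MvPolynomial.aeval qv p
          = ∑ j, monomial (Finsupp.single j d) (coeff (Finsupp.single j d)
              (MvPolynomial.aeval qv p)) := by
        apply MvPolynomial.ext
        intro m₀
        rw [coeff_sum]
        rw [Finset.sum_congr rfl (fun j (_ : j ∈ Finset.univ) => coeff_monomial m₀ _ _)]
        by_cases hex : ∃ j : Fin n, Finsupp.single j d = m₀
        · obtain ⟨j₀, hj₀⟩ := hex
          rw [Finset.sum_eq_single j₀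
            (fun j _ hjj => if_neg (fun hc => hjj (hsingle_inj _ _ (hc.trans hj₀.symm))))
            (fun h => absurd (Finset.mem_univ j₀) h)]
          rw [if_pos hj₀, hj₀]
        · rw [Finset.sum_eq_zero (fun j _ => if_neg (fun hc => hex ⟨j, hc⟩))]
          by_contra hc0
          have hmem : m₀ ∈ (MvPolynomial.aeval qv p).support :=
            MvPolynomial.mem_support_iff.mpr hc0
          obtain ⟨j, hj⟩ := (hclass m₀ hmem).1
          exact hex ⟨j, hj.symm⟩
      have hstep := LinLem.step5 α P hP hd1 hbin
        (fun j => coeff (Finsupp.single j d) (MvPolynomial.aeval qv p))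
        (by rw [← hph_eq]; exact hphP)
      rw [← hph_eq] at hstep
      have h1 := hdiff p
      have hco : p = MvPolynomial.aeval qv p + (p - MvPolynomial.aeval qv p) := by ring
      rw [hco]
      exact J.add_mem hstep h1
  -- conclude
  apply le_antisymm
  · intro p hp
    have hps := MvPolynomial.sum_homogeneousComponent p
    rw [← hps]
    exact Submodule.sum_mem _ fun k _ =>
      hkey k _ (hhom p hp k) (homogeneousComponent_isHomogeneous k p)
  · exact hJP
end

section
/- Let K ⊆ L be a field extension, let P be an ideal of K[T_1,...,T_n], and suppose the extension of P to L[T_1,...,T_n] is generated by its elements of degree 1. Then P is generated by its elements of degree 1. -/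
set_option synthInstance.maxHeartbeats 1000000
set_option maxHeartbeats 1000000

open MvPolynomial

section Aux

variable {K L : Type*} [Field K] [Field L] [Algebra K L] {n : ℕ}

/-- Apply a `K`-linear map `φ : L → K` to each coefficient of a polynomial. -/
noncomputable def piFun (φ : L →ₗ[K] K) (q : MvPolynomial (Fin n) L) :
    MvPolynomial (Fin n) K :=
  ∑ m ∈ q.support, monomial m (φ (q.coeff m))

lemma coeff_piFun (φ : L →ₗ[K] K) (q : MvPolynomial (Fin n) L) (m : Fin n →₀ ℕ) :
    coeff m (piFun φ q) = φ (q.coeff m) := by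
  classical
  rw [piFun, MvPolynomial.coeff_sum]
  rw [Finset.sum_eq_single m]
  · simp [coeff_monomial]
  · intro b _ hb
    simp [coeff_monomial, hb]
  · intro hm
    simp only [MvPolynomial.mem_support_iff, not_not] at hm
    simp [coeff_monomial, hm]

/-- `piFun` as a `K`-linear map. -/
noncomputable def piLin (φ : L →ₗ[K] K) :
    MvPolynomial (Fin n) L →ₗ[K] MvPolynomial (Fin n) K where
  toFun := piFun φ
  map_add' x y := by
    ext m
    simp [coeff_piFun, coeff_add]
  map_smul' c x := by
    ext m
    simp [coeff_piFun, MvPolynomial.coeff_smul]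

@[simp] lemma piLin_apply (φ : L →ₗ[K] K) (q : MvPolynomial (Fin n) L) :
    piLin φ q = piFun φ q := rfl

lemma piLin_mul_map (φ : L →ₗ[K] K) (c : MvPolynomial (Fin n) L)
    (p : MvPolynomial (Fin n) K) :
    piFun φ (c * MvPolynomial.map (algebraMap K L) p) = piFun φ c * p := by
  ext m
  rw [coeff_piFun, MvPolynomial.coeff_mul, MvPolynomial.coeff_mul, map_sum]
  refine Finset.sum_congr rfl fun x _ => ?_
  rw [MvPolynomial.coeff_map, coeff_piFun]
  have : c.coeff x.1 * (algebraMap K L) (p.coeff x.2) = p.coeff x.2 • c.coeff x.1 := by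
    rw [Algebra.smul_def, mul_comm]
  rw [this, map_smul, smul_eq_mul, mul_comm]

lemma piFun_isHomogeneous (φ : L →ₗ[K] K) {q : MvPolynomial (Fin n) L}
    (hq : q.IsHomogeneous 1) : (piFun φ q).IsHomogeneous 1 := by
  intro d hd
  apply hq
  rw [coeff_piFun] at hd
  intro h
  rw [h, map_zero] at hd
  exact hd rfl

lemma piFun_mem_of_mem_map (φ : L →ₗ[K] K) (P : Ideal (MvPolynomial (Fin n) K))
    {x : MvPolynomial (Fin n) L}
    (hx : x ∈ P.map (MvPolynomial.map (algebraMap K L))) :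
    piFun φ x ∈ P := by
  classical
  rw [Ideal.map, Ideal.span, Submodule.mem_span_set] at hx
  obtain ⟨c, hsupp, hsum⟩ := hx
  rw [← hsum]
  rw [Finsupp.sum]
  have : piFun φ (∑ a ∈ c.support, c a • a) =
      ∑ a ∈ c.support, piFun φ (c a • a) := by
    simp only [← piLin_apply, map_sum]
  rw [this]
  refine Submodule.sum_mem P fun a ha => ?_
  obtain ⟨p, hpP, rfl⟩ := hsupp ha
  rw [smul_eq_mul, piLin_mul_map]
  exact Ideal.mul_mem_left P _ hpP

lemma exists_decomp (q : MvPolynomial (Fin n) L) :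
    ∃ (F : Finset (Module.Basis.ofVectorSpaceIndex K L)),
      q = ∑ b ∈ F, C ((Module.Basis.ofVectorSpace K L) b) *
        MvPolynomial.map (algebraMap K L) (piFun ((Module.Basis.ofVectorSpace K L).coord b) q) := by
  classical
  set B := Module.Basis.ofVectorSpace K L
  refine ⟨q.support.biUnion (fun m => (B.repr (q.coeff m)).support), ?_⟩
  ext m
  rw [MvPolynomial.coeff_sum]
  have hterm : ∀ b, coeff m (C (B b) *
      MvPolynomial.map (algebraMap K L) (piFun (B.coord b) q)) =
      (B.repr (q.coeff m)) b • B b := by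
    intro b
    rw [coeff_C_mul, MvPolynomial.coeff_map, coeff_piFun, Module.Basis.coord_apply,
      Algebra.smul_def, mul_comm]
  simp only [hterm]
  have hsub : (B.repr (q.coeff m)).support ⊆
      q.support.biUnion (fun m => (B.repr (q.coeff m)).support) := by
    intro b hb
    rcases eq_or_ne (q.coeff m) 0 with h | h
    · simp [h] at hb
    · exact Finset.mem_biUnion.mpr ⟨m, MvPolynomial.mem_support_iff.mpr h, hb⟩
  have := Finsupp.sum_of_support_subset (B.repr (q.coeff m)) hsub
      (fun b c => c • B b) (fun b _ => zero_smul K (B b))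
  rw [← this]
  have := B.linearCombination_repr (q.coeff m)
  rw [Finsupp.linearCombination_apply] at this
  rw [this]

end Aux

/-- If the extension of an ideal `P ⊆ K[T_1,…,T_n]` to `L[T_1,…,T_n]` (for a field extension
`K ⊆ L`) is generated by its elements of degree 1, then so is `P`. -/
theorem generated_by_linear_forms_descends
    (K L : Type*) [Field K] [Field L] [Algebra K L] (n : ℕ)
    (P : Ideal (MvPolynomial (Fin n) K))
    (hext : P.map (MvPolynomial.map (algebraMap K L)) =
      Ideal.span {q : MvPolynomial (Fin n) L |
        q ∈ P.map (MvPolynomial.map (algebraMap K L)) ∧ q.IsHomogeneous 1}) :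
    P = Ideal.span {p : MvPolynomial (Fin n) K | p ∈ P ∧ p.IsHomogeneous 1} := by
  classical
  refine le_antisymm ?_ (Ideal.span_le.mpr fun p hp => hp.1)
  intro p hp
  -- a K-linear retraction of the inclusion K → L
  obtain ⟨r, hr⟩ := (Algebra.linearMap K L).exists_leftInverse_of_injective
    (LinearMap.ker_eq_bot.mpr (algebraMap K L).injective)
  have hr' : ∀ k : K, r ((algebraMap K L) k) = k := fun k => by
    have := LinearMap.congr_fun hr k
    simpa using this
  -- p = piFun r (map p)
  have hrp : piFun r (MvPolynomial.map (algebraMap K L) p) = p := by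
    ext m
    rw [coeff_piFun, MvPolynomial.coeff_map, hr']
  have hmem : MvPolynomial.map (algebraMap K L) p ∈
      P.map (MvPolynomial.map (algebraMap K L)) :=
    Ideal.mem_map_of_mem _ hp
  rw [hext, Ideal.span, Submodule.mem_span_set] at hmem
  obtain ⟨d, hdsupp, hdsum⟩ := hmem
  rw [← hrp, ← hdsum, Finsupp.sum]
  have : piFun r (∑ a ∈ d.support, d a • a) = ∑ a ∈ d.support, piFun r (d a • a) := by
    simp only [← piLin_apply, map_sum]
  rw [this]
  refine Submodule.sum_mem _ fun a ha => ?_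
  obtain ⟨haP, hahom⟩ := hdsupp ha
  obtain ⟨F, hF⟩ := exists_decomp (K := K) a
  set B := Module.Basis.ofVectorSpace K L
  have key : ∀ cc : MvPolynomial (Fin n) L, cc * a = ∑ b ∈ F,
      (cc * C (B b)) * MvPolynomial.map (algebraMap K L) (piFun (B.coord b) a) := by
    intro cc
    conv_lhs => rw [hF]
    rw [Finset.mul_sum]
    exact Finset.sum_congr rfl fun b _ => by ring
  rw [smul_eq_mul, key (d a)]
  have : piFun r (∑ b ∈ F,
      (d a * C (B b)) * MvPolynomial.map (algebraMap K L) (piFun (B.coord b) a)) =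
      ∑ b ∈ F, piFun r ((d a * C (B b)) *
        MvPolynomial.map (algebraMap K L) (piFun (B.coord b) a)) := by
    simp only [← piLin_apply, map_sum]
  rw [this]
  refine Submodule.sum_mem _ fun b _ => ?_
  rw [piLin_mul_map]
  refine Ideal.mul_mem_left _ _ (Submodule.subset_span ?_)
  exact ⟨piFun_mem_of_mem_map _ P haP, piFun_isHomogeneous _ hahom⟩
end

section
/- Define B(m,n,0) = m(n+1) and, for h ≥ 1, B(m,n,h) = (m+h)(n^3+n^2+n+1) + h(n+1) + B((m+h)n^2, n, h-1). Then for all h ≥ 0, B(m,n,h) ≥ (m+h)((n+1)(n^2)^h + g(n)·θ_h(n^2)), where g(n) = n^3+n^2+n+1 and θ_h(t) = 1 + t + ... + t^{h-1} (with θ_0 = 0). -/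
/-- The recursively defined bound `B(m,n,h)` from the paper. -/
def Bfun : ℕ → ℕ → ℕ → ℕ
  | m, n, 0 => m * (n + 1)
  | m, n, h + 1 =>
      (m + (h + 1)) * (n ^ 3 + n ^ 2 + n + 1) + (h + 1) * (n + 1) +
        Bfun ((m + (h + 1)) * n ^ 2) n h

/-- `θ_h(t) = 1 + t + … + t^{h-1}`. -/
def theta (h t : ℕ) : ℕ := ∑ i ∈ Finset.range h, t ^ i

/-- Lower bound: `B(m,n,h) ≥ (m+h)((n+1)(n²)^h + g(n)·θ_h(n²))` with `g(n) = n³+n²+n+1`. -/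
theorem Bfun_lower_bound (m n h : ℕ) :
    (m + h) * ((n + 1) * (n ^ 2) ^ h + (n ^ 3 + n ^ 2 + n + 1) * theta h (n ^ 2)) ≤
      Bfun m n h := by
  induction h generalizing m with
  | zero => simp [Bfun, theta]
  | succ h ih =>
    have H := le_trans (Nat.mul_le_mul_right _
      (Nat.le_add_right ((m + (h + 1)) * n ^ 2) h)) (ih ((m + (h + 1)) * n ^ 2))
    have ht : theta (h + 1) (n ^ 2) = 1 + n ^ 2 * theta h (n ^ 2) := by
      rw [theta, theta, Finset.sum_range_succ', pow_zero, Finset.mul_sum]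
      simp [pow_succ, mul_comm, add_comm]
    rw [Bfun, ht]
    have e : (m + (h + 1)) * ((n + 1) * (n ^ 2) ^ (h + 1) +
        (n ^ 3 + n ^ 2 + n + 1) * (1 + n ^ 2 * theta h (n ^ 2)))
        = (m + (h + 1)) * (n ^ 3 + n ^ 2 + n + 1) +
          (m + (h + 1)) * n ^ 2 *
            ((n + 1) * (n ^ 2) ^ h + (n ^ 3 + n ^ 2 + n + 1) * theta h (n ^ 2)) := by
      ring
    rw [e]
    omega
end

section
/- Define B(m,n,0) = m(n+1) and, for h ≥ 1, B(m,n,h) = (m+h)(n^3+n^2+n+1) + h(n+1) + B((m+h)n^2, n, h-1). Then for all h ≥ 0, B(m,n,h) ≤ (m+h)((n+1)(n^2+1)^h + g_1(n)·θ_h(n^2+1)), where g_1(n) = n^3+n^2+2n+2 and θ_h(t) = 1 + t + ... + t^{h-1} (with θ_0 = 0). -/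
lemma theta_succ (h t : ℕ) : theta (h + 1) t = 1 + t * theta h t := by
  rw [theta, theta, Finset.sum_range_succ', Finset.mul_sum]
  simp [pow_succ, mul_comm, add_comm]

/-- Upper bound: `B(m,n,h) ≤ (m+h)((n+1)(n²+1)^h + g₁(n)·θ_h(n²+1))` with
`g₁(n) = n³+n²+2n+2`. -/
theorem Bfun_upper_bound (m n h : ℕ) :
    Bfun m n h ≤
      (m + h) * ((n + 1) * (n ^ 2 + 1) ^ h + (n ^ 3 + n ^ 2 + 2 * n + 2) * theta h (n ^ 2 + 1)) := by
  induction h generalizing m with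
  | zero => simp [Bfun, theta]
  | succ h ih =>
    have IH := ih ((m + (h + 1)) * n ^ 2)
    calc Bfun m n (h + 1)
        = (m + (h + 1)) * (n ^ 3 + n ^ 2 + n + 1) + (h + 1) * (n + 1) +
            Bfun ((m + (h + 1)) * n ^ 2) n h := by rfl
      _ ≤ (m + (h + 1)) * (n ^ 3 + n ^ 2 + n + 1) + (h + 1) * (n + 1) +
            ((m + (h + 1)) * n ^ 2 + h) *
              ((n + 1) * (n ^ 2 + 1) ^ h + (n ^ 3 + n ^ 2 + 2 * n + 2) * theta h (n ^ 2 + 1)) :=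
          Nat.add_le_add_left IH _
      _ ≤ (m + (h + 1)) * (n ^ 3 + n ^ 2 + n + 1) + (m + (h + 1)) * (n + 1) +
            ((m + (h + 1)) * (n ^ 2 + 1)) *
              ((n + 1) * (n ^ 2 + 1) ^ h + (n ^ 3 + n ^ 2 + 2 * n + 2) * theta h (n ^ 2 + 1)) := by
          have h1 : (h + 1) * (n + 1) ≤ (m + (h + 1)) * (n + 1) :=
            Nat.mul_le_mul_right _ (by omega)
          have h2 : (m + (h + 1)) * n ^ 2 + h ≤ (m + (h + 1)) * (n ^ 2 + 1) := by
            rw [Nat.mul_add, Nat.mul_one]; omega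
          exact Nat.add_le_add (Nat.add_le_add_left h1 _) (Nat.mul_le_mul_right _ h2)
      _ = (m + (h + 1)) *
            ((n + 1) * (n ^ 2 + 1) ^ (h + 1) +
              (n ^ 3 + n ^ 2 + 2 * n + 2) * theta (h + 1) (n ^ 2 + 1)) := by
          rw [theta_succ]; ring
end
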